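/- arXiv:1007.2833 — 2 statements merged into one kernel-verified Lean document; each statement's English description precedes it below -/
import Mathlib

section
/- There exists a constant c > 0, depending only on L and h, such that for all u of class C² on M̄, all φ of class C¹ on M̄, and all continuous ψ on M̄, one has | ∫_M u (∂_x φ) ψ dM | ≤ c |u|^{1/2} |u|_{H²}^{1/2} |∂_x φ| |ψ|. -/
open MeasureTheory Set intervalIntegral

/-- Partial derivative in the first (horizontal, `x`) variable. -/
noncomputable def pdx (f : ℝ × ℝ → ℝ) (p : ℝ × ℝ) : ℝ := fderiv ℝ f p (1, 0)

/-- Partial derivative in the second (vertical, `z`) variable. -/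
noncomputable def pdz (f : ℝ × ℝ → ℝ) (p : ℝ × ℝ) : ℝ := fderiv ℝ f p (0, 1)

/-- The diagnostic vertical velocity `w(u)(x,z) = ∫_z^0 ∂ₓ u(x,s) ds`. -/
noncomputable def wOp (u : ℝ × ℝ → ℝ) (p : ℝ × ℝ) : ℝ := ∫ s in p.2..0, pdx u (p.1, s)

/-- The open domain `M = (0,L) × (-h,0)`. -/
def dom (L h : ℝ) : Set (ℝ × ℝ) := Ioo 0 L ×ˢ Ioo (-h) 0

/-- The closed domain `M̄ = [0,L] × [-h,0]`. -/
def cdom (L h : ℝ) : Set (ℝ × ℝ) := Icc 0 L ×ˢ Icc (-h) 0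

/-- The `L²(M)` norm. -/
noncomputable def l2 (L h : ℝ) (f : ℝ × ℝ → ℝ) : ℝ :=
  Real.sqrt (∫ p in dom L h, f p ^ 2)

/-- The `H¹(M)` norm. -/
noncomputable def h1n (L h : ℝ) (f : ℝ × ℝ → ℝ) : ℝ :=
  Real.sqrt (l2 L h f ^ 2 + l2 L h (pdx f) ^ 2 + l2 L h (pdz f) ^ 2)

/-- The `H²(M)` norm. -/
noncomputable def h2n (L h : ℝ) (f : ℝ × ℝ → ℝ) : ℝ :=
  Real.sqrt (h1n L h f ^ 2 + l2 L h (pdx (pdx f)) ^ 2 + l2 L h (pdx (pdz f)) ^ 2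
    + l2 L h (pdz (pdz f)) ^ 2)


lemma contDiff_pdx {n : ℕ} {f : ℝ × ℝ → ℝ} (hf : ContDiff ℝ (n+1) f) :
    ContDiff ℝ n (pdx f) := by
  have h := hf.fderiv_right (m := n) (by norm_cast)
  exact h.clm_apply contDiff_const

lemma contDiff_pdz {n : ℕ} {f : ℝ × ℝ → ℝ} (hf : ContDiff ℝ (n+1) f) :
    ContDiff ℝ n (pdz f) := by
  have h := hf.fderiv_right (m := n) (by norm_cast)
  exact h.clm_apply contDiff_const

lemma cont_pdx {f : ℝ × ℝ → ℝ} (hf : ContDiff ℝ 1 f) : Continuous (pdx f) := by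
  have : ContDiff ℝ ((0:ℕ)+1) f := by exact_mod_cast hf
  exact (contDiff_pdx this).continuous

lemma cont_pdz {f : ℝ × ℝ → ℝ} (hf : ContDiff ℝ 1 f) : Continuous (pdz f) := by
  have : ContDiff ℝ ((0:ℕ)+1) f := by exact_mod_cast hf
  exact (contDiff_pdz this).continuous

lemma hasDerivAt_slice_x {f : ℝ × ℝ → ℝ} (hf : Differentiable ℝ f) (x z : ℝ) :
    HasDerivAt (fun s => f (s, z)) (pdx f (x, z)) x := by
  have h1 : HasDerivAt (fun s : ℝ => (s, z)) ((1:ℝ), (0:ℝ)) x :=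
    (hasDerivAt_id x).prodMk (hasDerivAt_const x z)
  exact ((hf (x, z)).hasFDerivAt.comp_hasDerivAt x h1)

lemma hasDerivAt_slice_z {f : ℝ × ℝ → ℝ} (hf : Differentiable ℝ f) (x z : ℝ) :
    HasDerivAt (fun t => f (x, t)) (pdz f (x, z)) z := by
  have h1 : HasDerivAt (fun t : ℝ => (x, t)) ((0:ℝ), (1:ℝ)) z :=
    (hasDerivAt_const z x).prodMk (hasDerivAt_id z)
  exact ((hf (x, z)).hasFDerivAt.comp_hasDerivAt z h1)

/-- Cauchy–Schwarz for integrals (self-contained version). -/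
lemma cs_integral {α : Type*} [MeasurableSpace α] (μ : Measure α) (f g : α → ℝ)
    (hf : Integrable (fun x => f x ^ 2) μ) (hg : Integrable (fun x => g x ^ 2) μ)
    (hfg : Integrable (fun x => |f x| * |g x|) μ) :
    ∫ x, |f x| * |g x| ∂μ ≤
      Real.sqrt (∫ x, f x ^ 2 ∂μ) * Real.sqrt (∫ x, g x ^ 2 ∂μ) := by
  set A := ∫ x, f x ^ 2 ∂μ with hA
  set B := ∫ x, g x ^ 2 ∂μ with hB
  set I := ∫ x, |f x| * |g x| ∂μ with hI
  have hA0 : 0 ≤ A := integral_nonneg fun x => sq_nonneg _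
  have hB0 : 0 ≤ B := integral_nonneg fun x => sq_nonneg _
  have key : ∀ t : ℝ, 0 < t → 2 * t * I ≤ t ^ 2 * A + B := by
    intro t ht
    have hpt : ∀ x, 2 * t * (|f x| * |g x|) ≤ t ^ 2 * f x ^ 2 + g x ^ 2 := by
      intro x
      nlinarith [sq_nonneg (t * |f x| - |g x|), sq_abs (f x), sq_abs (g x)]
    calc 2 * t * I = ∫ x, 2 * t * (|f x| * |g x|) ∂μ :=
          (MeasureTheory.integral_const_mul _ _).symm
      _ ≤ ∫ x, (t ^ 2 * f x ^ 2 + g x ^ 2) ∂μ :=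
          integral_mono (hfg.const_mul _) ((hf.const_mul _).add hg) hpt
      _ = t ^ 2 * A + B := by
          rw [integral_add (hf.const_mul _) hg, MeasureTheory.integral_const_mul]
  have keps : ∀ ε : ℝ, 0 < ε → I ≤ Real.sqrt (A + ε) * Real.sqrt (B + ε) := by
    intro ε hε
    have hAε : 0 < A + ε := by linarith
    have hBε : 0 < B + ε := by linarith
    set t := Real.sqrt (B + ε) / Real.sqrt (A + ε) with htdef
    have ht : 0 < t := by positivity
    have ht2 : t ^ 2 = (B + ε) / (A + ε) := by
      rw [htdef, div_pow, Real.sq_sqrt hAε.le, Real.sq_sqrt hBε.le]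
    have h1 : 2 * t * I ≤ t ^ 2 * A + B := key t ht
    have h2 : t ^ 2 * A + B ≤ 2 * (B + ε) := by
      have h5 : t ^ 2 * A ≤ t ^ 2 * (A + ε) := by nlinarith [sq_nonneg t]
      have h6 : t ^ 2 * (A + ε) = B + ε := by
        rw [ht2, div_mul_cancel₀ _ hAε.ne']
      linarith
    have h3 : I ≤ (B + ε) / t := by
      rw [le_div_iff₀ ht]
      nlinarith
    have h4 : (B + ε) / t = Real.sqrt (A + ε) * Real.sqrt (B + ε) := by
      rw [htdef, div_div_eq_mul_div, mul_comm, mul_div_assoc, Real.div_sqrt, mul_comm]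
    linarith [h3, h4.le]
  have hne : (nhdsWithin (0:ℝ) (Ioi 0)).NeBot := inferInstance
  have htend : Filter.Tendsto (fun ε : ℝ => Real.sqrt (A + ε) * Real.sqrt (B + ε))
      (nhdsWithin (0:ℝ) (Ioi 0)) (nhds (Real.sqrt A * Real.sqrt B)) := by
    have hc : Continuous fun ε : ℝ => Real.sqrt (A + ε) * Real.sqrt (B + ε) :=
      ((Real.continuous_sqrt.comp (continuous_const.add continuous_id)).mul
        (Real.continuous_sqrt.comp (continuous_const.add continuous_id)))
    have := hc.tendsto 0
    simp only [add_zero] at this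
    exact this.mono_left nhdsWithin_le_nhds
  exact ge_of_tendsto htend (eventually_nhdsWithin_of_forall fun ε hε => keps ε hε)

section OneD

variable {a b : ℝ}

lemma cont_of_hasDerivAt {g g' : ℝ → ℝ} (hg : ∀ t, HasDerivAt g (g' t) t) :
    Continuous g :=
  continuous_iff_continuousAt.2 fun t => (hg t).continuousAt

/-- 1D Cauchy–Schwarz on an interval. -/
lemma cs1d (hab : a ≤ b) {f g : ℝ → ℝ} (hf : Continuous f) (hg : Continuous g) :
    (∫ y in a..b, |f y| * |g y|) ≤
      Real.sqrt (∫ y in a..b, f y ^ 2) * Real.sqrt (∫ y in a..b, g y ^ 2) := by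
  rw [integral_of_le hab, integral_of_le hab, integral_of_le hab]
  exact cs_integral _ f g
    ((hf.pow 2).integrableOn_Icc.mono_set Ioc_subset_Icc_self)
    ((hg.pow 2).integrableOn_Icc.mono_set Ioc_subset_Icc_self)
    (((hf.abs.mul hg.abs)).integrableOn_Icc.mono_set Ioc_subset_Icc_self)

/-- 1D sup bound: for `x ∈ [a,b]`,
`g x ^ 2 ≤ (1/(b-a)) ∫ g² + 2 ∫ |g||g'|`. -/
lemma sup1d (hab : a < b) {g g' : ℝ → ℝ}
    (hg : ∀ t, HasDerivAt g (g' t) t) (hg' : Continuous g')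
    {x : ℝ} (hx : x ∈ Icc a b) :
    g x ^ 2 ≤ (1/(b-a)) * (∫ y in a..b, g y ^ 2) + 2 * ∫ y in a..b, |g y| * |g' y| := by
  have hgc : Continuous g := cont_of_hasDerivAt hg
  have hsq : ∀ t, HasDerivAt (fun s => g s ^ 2) (2 * g t * g' t) t := by
    intro t
    simpa [pow_one, mul_comm, mul_assoc, mul_left_comm] using (hg t).fun_pow 2
  have hcont2 : Continuous fun s => 2 * g s * g' s :=
    ((continuous_const.mul hgc).mul hg')
  set C := ∫ y in a..b, |g y| * |g' y| with hC
  have key : ∀ y ∈ Icc a b, g x ^ 2 ≤ g y ^ 2 + 2 * C := by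
    intro y hy
    have hftc : ∫ s in y..x, 2 * g s * g' s = g x ^ 2 - g y ^ 2 :=
      integral_eq_sub_of_hasDerivAt (fun s _ => hsq s)
        (hcont2.intervalIntegrable _ _)
    have habs : |∫ s in y..x, 2 * g s * g' s| ≤ 2 * C := by
      have h1 : |∫ s in y..x, 2 * g s * g' s| ≤ abs (∫ s in y..x, 2 * |g s| * |g' s|) := by
        simpa [Real.norm_eq_abs] using
          norm_integral_le_abs_integral_norm (f := fun s => 2 * g s * g' s)
            (a := y) (b := x) (μ := volume)
      have hsub : Set.uIoc y x ⊆ Set.uIoc a b := by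
        rw [uIoc_of_le hab.le]
        rcases le_total y x with hyx | hyx
        · rw [uIoc_of_le hyx]; exact Ioc_subset_Ioc hy.1 hx.2
        · rw [uIoc_of_ge hyx]; exact Ioc_subset_Ioc hx.1 hy.2
      have h2 : abs (∫ s in y..x, 2 * |g s| * |g' s|) ≤ abs (∫ s in a..b, 2 * |g s| * |g' s|) :=
        abs_integral_mono_interval hsub
          (Filter.Eventually.of_forall fun s => by positivity)
          (((continuous_const.mul hgc.abs).mul hg'.abs).intervalIntegrable _ _)
      have h3 : (∫ s in a..b, 2 * |g s| * |g' s|) = 2 * C := by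
        rw [hC, ← intervalIntegral.integral_const_mul]
        apply intervalIntegral.integral_congr
        intro s _
        ring
      have h4 : abs (∫ s in a..b, 2 * |g s| * |g' s|) = ∫ s in a..b, 2 * |g s| * |g' s| :=
        abs_of_nonneg (intervalIntegral.integral_nonneg hab.le fun s _ => by positivity)
      calc |∫ s in y..x, 2 * g s * g' s| ≤ abs (∫ s in y..x, 2 * |g s| * |g' s|) := h1
        _ ≤ abs (∫ s in a..b, 2 * |g s| * |g' s|) := h2
        _ = 2 * C := by rw [h4, h3]
    rw [hftc] at habs
    linarith [(abs_le.1 habs).2]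
  have hint : (b - a) * g x ^ 2 ≤ (∫ y in a..b, g y ^ 2) + (b - a) * (2 * C) := by
    have h1 : ∫ (_ : ℝ) in a..b, g x ^ 2 = (b - a) * g x ^ 2 := by
      simp [intervalIntegral.integral_const, smul_eq_mul]
    have h2 : ∫ y in a..b, (g y ^ 2 + 2 * C) = (∫ y in a..b, g y ^ 2) + (b - a) * (2 * C) := by
      rw [intervalIntegral.integral_add ((hgc.fun_pow 2).intervalIntegrable _ _)
        (intervalIntegrable_const)]
      simp [intervalIntegral.integral_const, smul_eq_mul]
      ring
    have h3 : (∫ (_ : ℝ) in a..b, g x ^ 2) ≤ ∫ y in a..b, (g y ^ 2 + 2 * C) :=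
      intervalIntegral.integral_mono_on hab.le intervalIntegrable_const
        (((hgc.pow 2).intervalIntegrable _ _).add intervalIntegrable_const) key
    rw [h1, h2] at h3
    exact h3
  have hba : 0 < b - a := by linarith
  have h9 : g x ^ 2 ≤ ((∫ y in a..b, g y ^ 2) + (b - a) * (2 * C)) / (b - a) := by
    rw [le_div_iff₀ hba]
    linarith [hint]
  have h10 : ((∫ y in a..b, g y ^ 2) + (b - a) * (2 * C)) / (b - a)
      = 1 / (b - a) * (∫ y in a..b, g y ^ 2) + 2 * C := by
    field_simp
  linarith [h9, h10.le]

/-- 1D integration by parts for `∫ g'²`. -/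
lemma parts1d (hab : a ≤ b) {g g' g'' : ℝ → ℝ}
    (hg : ∀ t, HasDerivAt g (g' t) t) (hg' : ∀ t, HasDerivAt g' (g'' t) t)
    (hg''c : Continuous g'') :
    ∫ y in a..b, g' y ^ 2 =
      g b * g' b - g a * g' a - ∫ y in a..b, g y * g'' y := by
  have hgc : Continuous g := cont_of_hasDerivAt hg
  have hg'c : Continuous g' := cont_of_hasDerivAt hg'
  have hprod : ∀ t, HasDerivAt (fun s => g s * g' s) (g' t ^ 2 + g t * g'' t) t := by
    intro t
    have := (hg t).fun_mul (hg' t)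
    simpa [sq, mul_comm, mul_assoc, mul_left_comm, add_comm] using this
  have hftc : ∫ y in a..b, (g' y ^ 2 + g y * g'' y) = g b * g' b - g a * g' a :=
    integral_eq_sub_of_hasDerivAt (fun s _ => hprod s)
      (((hg'c.pow 2).add (hgc.mul hg''c)).intervalIntegrable _ _)
  rw [intervalIntegral.integral_add ((hg'c.fun_pow 2).intervalIntegrable _ _)
    ((hgc.fun_mul hg''c).intervalIntegrable _ _)] at hftc
  linarith

end OneD

section TwoD


variable {L h : ℝ}

lemma integrableOn_dom (hf : Continuous (f : ℝ × ℝ → ℝ)) :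
    IntegrableOn f (dom L h) := by
  have hc : IsCompact (cdom L h) := (isCompact_Icc).prod isCompact_Icc
  have h1 : IntegrableOn f (cdom L h) := hf.continuousOn.integrableOn_compact hc
  exact h1.mono_set (prod_mono Ioo_subset_Icc_self Ioo_subset_Icc_self)

lemma set_to_iter (hL : 0 < L) (hh : 0 < h) {f : ℝ × ℝ → ℝ} (hf : Continuous f) :
    ∫ p in dom L h, f p = ∫ x in (0:ℝ)..L, ∫ t in (-h)..(0:ℝ), f (x, t) := by
  have hint : IntegrableOn f (dom L h) := integrableOn_dom hf
  rw [show (volume : Measure (ℝ × ℝ)) = (volume.prod volume) from (MeasureTheory.Measure.volume_eq_prod ℝ ℝ)]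
    at hint ⊢
  rw [dom] at hint ⊢
  rw [MeasureTheory.setIntegral_prod f hint]
  rw [intervalIntegral.integral_of_le hL.le, ← MeasureTheory.integral_Ioc_eq_integral_Ioo]
  apply MeasureTheory.setIntegral_congr_fun measurableSet_Ioc
  intro x _
  simp only [intervalIntegral.integral_of_le (show (-h:ℝ) ≤ 0 by linarith),
    MeasureTheory.integral_Ioc_eq_integral_Ioo]

lemma iter_swap (hL : 0 < L) (hh : 0 < h) {f : ℝ × ℝ → ℝ} (hf : Continuous f) :
    (∫ x in (0:ℝ)..L, ∫ t in (-h)..(0:ℝ), f (x, t)) =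
      ∫ t in (-h)..(0:ℝ), ∫ x in (0:ℝ)..L, f (x, t) := by
  have hint : IntegrableOn f (dom L h) := integrableOn_dom hf
  have hint' : Integrable (Function.uncurry fun x t => f (x, t))
      ((volume.restrict (Ioo (0:ℝ) L)).prod (volume.restrict (Ioo (-h) (0:ℝ)))) := by
    rw [Measure.prod_restrict]
    rw [show (volume : Measure (ℝ × ℝ)) = (volume.prod volume) from (MeasureTheory.Measure.volume_eq_prod ℝ ℝ)]
      at hint
    exact hint
  have hswap := MeasureTheory.integral_integral_swap hint'
  have e1 : (∫ x in (0:ℝ)..L, ∫ t in (-h)..(0:ℝ), f (x, t)) =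
      ∫ x in Ioo (0:ℝ) L, ∫ t in Ioo (-h) (0:ℝ), f (x, t) := by
    rw [intervalIntegral.integral_of_le hL.le, ← MeasureTheory.integral_Ioc_eq_integral_Ioo]
    apply MeasureTheory.setIntegral_congr_fun measurableSet_Ioc
    intro x _
    simp only [intervalIntegral.integral_of_le (show (-h:ℝ) ≤ 0 by linarith),
      MeasureTheory.integral_Ioc_eq_integral_Ioo]
  have e2 : (∫ t in (-h)..(0:ℝ), ∫ x in (0:ℝ)..L, f (x, t)) =
      ∫ t in Ioo (-h) (0:ℝ), ∫ x in Ioo (0:ℝ) L, f (x, t) := by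
    rw [intervalIntegral.integral_of_le (by linarith : -h ≤ 0),
      ← MeasureTheory.integral_Ioc_eq_integral_Ioo]
    apply MeasureTheory.setIntegral_congr_fun measurableSet_Ioc
    intro t _
    simp only [intervalIntegral.integral_of_le hL.le,
      MeasureTheory.integral_Ioc_eq_integral_Ioo]
  rw [e1, e2]
  exact hswap

end TwoD

noncomputable def II (L h : ℝ) (F : ℝ × ℝ → ℝ) : ℝ :=
  ∫ x in (0:ℝ)..L, ∫ t in (-h)..(0:ℝ), F (x, t)

section TwoDb

variable {L h : ℝ}

lemma cont_inner {F : ℝ × ℝ → ℝ} (hF : Continuous F) (x : ℝ) :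
    Continuous fun t => F (x, t) :=
  hF.comp (continuous_const.prodMk continuous_id)

lemma cont_outer {F : ℝ × ℝ → ℝ} (hF : Continuous F) (t : ℝ) :
    Continuous fun x => F (x, t) :=
  hF.comp (continuous_id.prodMk continuous_const)

lemma cont_param_z {F : ℝ × ℝ → ℝ} (hF : Continuous F) :
    Continuous fun x => ∫ t in (-h)..(0:ℝ), F (x, t) := by
  apply continuous_parametric_intervalIntegral_of_continuous' (f := fun x t => F (x, t))
  exact hF

lemma cont_param_x {F : ℝ × ℝ → ℝ} (hF : Continuous F) :
    Continuous fun t => ∫ x in (0:ℝ)..L, F (x, t) := by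
  apply continuous_parametric_intervalIntegral_of_continuous' (f := fun t x => F (x, t))
  exact hF.comp (continuous_snd.prodMk continuous_fst)

lemma II_nonneg (hL : 0 < L) (hh : 0 < h) {F : ℝ × ℝ → ℝ} (hF : ∀ p, 0 ≤ F p) :
    0 ≤ II L h F := by
  apply intervalIntegral.integral_nonneg hL.le
  intro x _
  exact intervalIntegral.integral_nonneg (by linarith) (fun t _ => hF _)

lemma inner_nonneg (hh : 0 < h) {F : ℝ × ℝ → ℝ} (hF : ∀ p, 0 ≤ F p) (x : ℝ) :
    0 ≤ ∫ t in (-h)..(0:ℝ), F (x, t) :=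
  intervalIntegral.integral_nonneg (by linarith) (fun t _ => hF _)

lemma abs_II_le (hL : 0 < L) (hh : 0 < h) {F : ℝ × ℝ → ℝ} (hF : Continuous F) :
    |II L h F| ≤ II L h (fun p => |F p|) := by
  have h1 : |II L h F| ≤ ∫ x in (0:ℝ)..L, |∫ t in (-h)..(0:ℝ), F (x, t)| := by
    apply intervalIntegral.abs_integral_le_integral_abs hL.le
  apply h1.trans
  apply intervalIntegral.integral_mono_on hL.le
  · exact ((cont_param_z hF).abs).intervalIntegrable _ _
  · exact (cont_param_z hF.abs).intervalIntegrable _ _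
  · intro x _
    exact intervalIntegral.abs_integral_le_integral_abs (by linarith)

lemma cs2d (hL : 0 < L) (hh : 0 < h) {f g : ℝ × ℝ → ℝ}
    (hf : Continuous f) (hg : Continuous g) :
    II L h (fun p => |f p| * |g p|) ≤
      Real.sqrt (II L h fun p => f p ^ 2) * Real.sqrt (II L h fun p => g p ^ 2) := by
  set Af : ℝ → ℝ := fun x => ∫ t in (-h)..(0:ℝ), f (x, t) ^ 2 with hAf
  set Ag : ℝ → ℝ := fun x => ∫ t in (-h)..(0:ℝ), g (x, t) ^ 2 with hAg
  have hAfc : Continuous Af := cont_param_z (hf.pow 2)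
  have hAgc : Continuous Ag := cont_param_z (hg.pow 2)
  have hAf0 : ∀ x, 0 ≤ Af x := fun x => inner_nonneg hh (fun p => sq_nonneg _) x
  have hAg0 : ∀ x, 0 ≤ Ag x := fun x => inner_nonneg hh (fun p => sq_nonneg _) x
  have step1 : II L h (fun p => |f p| * |g p|) ≤
      ∫ x in (0:ℝ)..L, Real.sqrt (Af x) * Real.sqrt (Ag x) := by
    apply intervalIntegral.integral_mono_on hL.le
    · exact (cont_param_z (hf.abs.mul hg.abs)).intervalIntegrable _ _
    · exact ((Real.continuous_sqrt.comp hAfc).mul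
        (Real.continuous_sqrt.comp hAgc)).intervalIntegrable _ _
    · intro x _
      exact cs1d (by linarith) (cont_inner hf x) (cont_inner hg x)
  apply step1.trans
  have step2 : (∫ x in (0:ℝ)..L, Real.sqrt (Af x) * Real.sqrt (Ag x)) =
      ∫ x in (0:ℝ)..L, |Real.sqrt (Af x)| * |Real.sqrt (Ag x)| := by
    apply intervalIntegral.integral_congr
    intro x _
    simp only [abs_of_nonneg (Real.sqrt_nonneg _)]
  rw [step2]
  have step3 := cs1d (f := fun x => Real.sqrt (Af x)) (g := fun x => Real.sqrt (Ag x))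
    hL.le (Real.continuous_sqrt.comp hAfc) (Real.continuous_sqrt.comp hAgc)
  apply step3.trans
  have e1 : (∫ x in (0:ℝ)..L, Real.sqrt (Af x) ^ 2) = II L h fun p => f p ^ 2 := by
    apply intervalIntegral.integral_congr
    intro x _
    exact Real.sq_sqrt (hAf0 x)
  have e2 : (∫ x in (0:ℝ)..L, Real.sqrt (Ag x) ^ 2) = II L h fun p => g p ^ 2 := by
    apply intervalIntegral.integral_congr
    intro x _
    exact Real.sq_sqrt (hAg0 x)
  rw [e1, e2]

end TwoDb

section Traces

variable {L h : ℝ}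

/-- Trace estimate at a fixed height `z0 ∈ [-h,0]`. -/
lemma trace_pt_z (hL : 0 < L) (hh : 0 < h) {f : ℝ × ℝ → ℝ}
    (hfd : Differentiable ℝ f) (hf'c : Continuous (pdz f))
    {z0 : ℝ} (hz0 : z0 ∈ Icc (-h) (0:ℝ)) :
    (∫ x in (0:ℝ)..L, f (x, z0) ^ 2) ≤
      (1/h) * II L h (fun p => f p ^ 2) +
        2 * II L h (fun p => |f p| * |pdz f p|) := by
  have hfc : Continuous f := hfd.continuous
  have key : ∀ x : ℝ, f (x, z0) ^ 2 ≤
      (1/h) * (∫ t in (-h)..(0:ℝ), f (x, t) ^ 2) +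
        2 * ∫ t in (-h)..(0:ℝ), |f (x, t)| * |pdz f (x, t)| := by
    intro x
    have := sup1d (a := -h) (b := 0) (by linarith)
      (g := fun t => f (x, t)) (g' := fun t => pdz f (x, t))
      (fun t => hasDerivAt_slice_z hfd x t) (cont_inner hf'c x) (x := z0) hz0
    simpa [sub_neg_eq_add, zero_add] using this
  have c1 : Continuous fun x => (1/h) * (∫ t in (-h)..(0:ℝ), f (x, t) ^ 2) :=
    continuous_const.mul (cont_param_z (hfc.pow 2))
  have c2 : Continuous fun x =>
      (2:ℝ) * ∫ t in (-h)..(0:ℝ), |f (x, t)| * |pdz f (x, t)| :=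
    continuous_const.mul (cont_param_z (hfc.abs.mul hf'c.abs))
  have hmono : (∫ x in (0:ℝ)..L, f (x, z0) ^ 2) ≤
      ∫ x in (0:ℝ)..L,
        ((1/h) * (∫ t in (-h)..(0:ℝ), f (x, t) ^ 2) +
          2 * ∫ t in (-h)..(0:ℝ), |f (x, t)| * |pdz f (x, t)|) :=
    intervalIntegral.integral_mono_on hL.le
      ((cont_outer (hfc.pow 2) z0).intervalIntegrable _ _)
      ((c1.add c2).intervalIntegrable _ _)
      (fun x _ => key x)
  have hsplit : (∫ x in (0:ℝ)..L,
      ((1/h) * (∫ t in (-h)..(0:ℝ), f (x, t) ^ 2) +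
        2 * ∫ t in (-h)..(0:ℝ), |f (x, t)| * |pdz f (x, t)|)) =
      (1/h) * II L h (fun p => f p ^ 2) +
        2 * II L h (fun p => |f p| * |pdz f p|) := by
    rw [intervalIntegral.integral_add (c1.intervalIntegrable _ _) (c2.intervalIntegrable _ _),
      intervalIntegral.integral_const_mul, intervalIntegral.integral_const_mul]
    rfl
  rw [hsplit] at hmono
  exact hmono

/-- Trace estimate at a fixed abscissa `x0 ∈ [0,L]`. -/
lemma trace_pt_x (hL : 0 < L) (hh : 0 < h) {f : ℝ × ℝ → ℝ}
    (hfd : Differentiable ℝ f) (hf'c : Continuous (pdx f))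
    {x0 : ℝ} (hx0 : x0 ∈ Icc (0:ℝ) L) :
    (∫ t in (-h)..(0:ℝ), f (x0, t) ^ 2) ≤
      (1/L) * II L h (fun p => f p ^ 2) +
        2 * II L h (fun p => |f p| * |pdx f p|) := by
  have hfc : Continuous f := hfd.continuous
  have key : ∀ t : ℝ, f (x0, t) ^ 2 ≤
      (1/L) * (∫ x in (0:ℝ)..L, f (x, t) ^ 2) +
        2 * ∫ x in (0:ℝ)..L, |f (x, t)| * |pdx f (x, t)| := by
    intro t
    have := sup1d (a := 0) (b := L) hL
      (g := fun x => f (x, t)) (g' := fun x => pdx f (x, t))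
      (fun x => hasDerivAt_slice_x hfd x t) (cont_outer hf'c t) (x := x0) hx0
    simpa [sub_zero] using this
  have c1 : Continuous fun t => (1/L) * (∫ x in (0:ℝ)..L, f (x, t) ^ 2) :=
    continuous_const.mul (cont_param_x (hfc.pow 2))
  have c2 : Continuous fun t =>
      (2:ℝ) * ∫ x in (0:ℝ)..L, |f (x, t)| * |pdx f (x, t)| :=
    continuous_const.mul (cont_param_x (hfc.abs.mul hf'c.abs))
  have hmono : (∫ t in (-h)..(0:ℝ), f (x0, t) ^ 2) ≤
      ∫ t in (-h)..(0:ℝ),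
        ((1/L) * (∫ x in (0:ℝ)..L, f (x, t) ^ 2) +
          2 * ∫ x in (0:ℝ)..L, |f (x, t)| * |pdx f (x, t)|) :=
    intervalIntegral.integral_mono_on (by linarith)
      ((cont_inner (hfc.pow 2) x0).intervalIntegrable _ _)
      ((c1.add c2).intervalIntegrable _ _)
      (fun t _ => key t)
  have hsplit : (∫ t in (-h)..(0:ℝ),
      ((1/L) * (∫ x in (0:ℝ)..L, f (x, t) ^ 2) +
        2 * ∫ x in (0:ℝ)..L, |f (x, t)| * |pdx f (x, t)|)) =
      (1/L) * II L h (fun p => f p ^ 2) +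
        2 * II L h (fun p => |f p| * |pdx f p|) := by
    rw [intervalIntegral.integral_add (c1.intervalIntegrable _ _) (c2.intervalIntegrable _ _),
      intervalIntegral.integral_const_mul, intervalIntegral.integral_const_mul,
      II, II, ← iter_swap hL hh (hfc.fun_pow 2), ← iter_swap hL hh (hfc.abs.fun_mul hf'c.abs)]
  rw [hsplit] at hmono
  exact hmono

end Traces

section Parts

variable {L h : ℝ}

lemma partsz (hL : 0 < L) (hh : 0 < h) {f : ℝ × ℝ → ℝ}
    (hfd : Differentiable ℝ f) (hzd : Differentiable ℝ (pdz f))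
    (hzzc : Continuous (pdz (pdz f))) :
    II L h (fun p => pdz f p ^ 2) =
      (∫ x in (0:ℝ)..L, f (x, 0) * pdz f (x, 0)) -
        (∫ x in (0:ℝ)..L, f (x, -h) * pdz f (x, -h)) -
        II L h (fun p => f p * pdz (pdz f) p) := by
  have hfc : Continuous f := hfd.continuous
  have hzc : Continuous (pdz f) := hzd.continuous
  have inner : ∀ x : ℝ, (∫ t in (-h)..(0:ℝ), pdz f (x, t) ^ 2) =
      f (x, 0) * pdz f (x, 0) - f (x, -h) * pdz f (x, -h) -
        ∫ t in (-h)..(0:ℝ), f (x, t) * pdz (pdz f) (x, t) := by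
    intro x
    exact parts1d (by linarith)
      (fun t => hasDerivAt_slice_z hfd x t)
      (fun t => hasDerivAt_slice_z hzd x t)
      (cont_inner hzzc x)
  have e1 : II L h (fun p => pdz f p ^ 2) =
      ∫ x in (0:ℝ)..L,
        (f (x, 0) * pdz f (x, 0) - f (x, -h) * pdz f (x, -h) -
          ∫ t in (-h)..(0:ℝ), f (x, t) * pdz (pdz f) (x, t)) := by
    rw [II]
    exact intervalIntegral.integral_congr fun x _ => inner x
  rw [e1]
  have i1 : IntervalIntegrable (fun x => f (x, 0) * pdz f (x, 0)) volume 0 L :=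
    ((cont_outer hfc 0).mul (cont_outer hzc 0)).intervalIntegrable _ _
  have i2 : IntervalIntegrable (fun x => f (x, -h) * pdz f (x, -h)) volume 0 L :=
    ((cont_outer hfc (-h)).mul (cont_outer hzc (-h))).intervalIntegrable _ _
  have i3 : IntervalIntegrable
      (fun x => ∫ t in (-h)..(0:ℝ), f (x, t) * pdz (pdz f) (x, t)) volume 0 L :=
    (cont_param_z (hfc.mul hzzc)).intervalIntegrable _ _
  rw [intervalIntegral.integral_sub (i1.sub i2) i3, intervalIntegral.integral_sub i1 i2]
  rfl

lemma partsx (hL : 0 < L) (hh : 0 < h) {f : ℝ × ℝ → ℝ}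
    (hfd : Differentiable ℝ f) (hxd : Differentiable ℝ (pdx f))
    (hxxc : Continuous (pdx (pdx f))) :
    II L h (fun p => pdx f p ^ 2) =
      (∫ t in (-h)..(0:ℝ), f (L, t) * pdx f (L, t)) -
        (∫ t in (-h)..(0:ℝ), f (0, t) * pdx f (0, t)) -
        II L h (fun p => f p * pdx (pdx f) p) := by
  have hfc : Continuous f := hfd.continuous
  have hxc : Continuous (pdx f) := hxd.continuous
  have inner : ∀ t : ℝ, (∫ x in (0:ℝ)..L, pdx f (x, t) ^ 2) =
      f (L, t) * pdx f (L, t) - f (0, t) * pdx f (0, t) -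
        ∫ x in (0:ℝ)..L, f (x, t) * pdx (pdx f) (x, t) := by
    intro t
    exact parts1d hL.le
      (fun x => hasDerivAt_slice_x hfd x t)
      (fun x => hasDerivAt_slice_x hxd x t)
      (cont_outer hxxc t)
  have e1 : II L h (fun p => pdx f p ^ 2) =
      ∫ t in (-h)..(0:ℝ),
        (f (L, t) * pdx f (L, t) - f (0, t) * pdx f (0, t) -
          ∫ x in (0:ℝ)..L, f (x, t) * pdx (pdx f) (x, t)) := by
    rw [II, iter_swap hL hh (hxc.fun_pow 2)]
    exact intervalIntegral.integral_congr fun t _ => inner t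
  rw [e1]
  have i1 : IntervalIntegrable (fun t => f (L, t) * pdx f (L, t)) volume (-h) 0 :=
    ((cont_inner hfc L).mul (cont_inner hxc L)).intervalIntegrable _ _
  have i2 : IntervalIntegrable (fun t => f (0, t) * pdx f (0, t)) volume (-h) 0 :=
    ((cont_inner hfc 0).mul (cont_inner hxc 0)).intervalIntegrable _ _
  have i3 : IntervalIntegrable
      (fun t => ∫ x in (0:ℝ)..L, f (x, t) * pdx (pdx f) (x, t)) volume (-h) 0 :=
    (cont_param_x (hfc.mul hxxc)).intervalIntegrable _ _
  rw [intervalIntegral.integral_sub (i1.sub i2) i3, intervalIntegral.integral_sub i1 i2]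
  rw [II, iter_swap hL hh (hfc.fun_mul hxxc)]

end Parts

section InterpAlg

lemma sqrt_prod_eq {c A X Q : ℝ} (hc : 0 ≤ c) (hA : 0 ≤ A) (hX : 0 ≤ X) (hQ : 0 ≤ Q) :
    Real.sqrt (c * (A * X)) * Real.sqrt (c * (X * Q)) =
      c * X * Real.sqrt (A * Q) := by
  rw [← Real.sqrt_mul (by positivity)]
  have e : c * (A * X) * (c * (X * Q)) = (c * X) ^ 2 * (A * Q) := by ring
  rw [e, Real.sqrt_mul (sq_nonneg _), Real.sqrt_sq (by positivity)]

lemma interp_alg {c A X Z Q : ℝ} (hc : 0 < c)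
    (hA : 0 ≤ A) (hX : 0 ≤ X) (hZ : 0 ≤ Z) (hAQ : A ≤ Q) (hXQ : X ≤ Q) (hZQ : Z ≤ Q)
    (key : X ^ 2 ≤ A * Z +
      2 * Real.sqrt (c * A ^ 2 + 2 * (A * X)) * Real.sqrt (c * X ^ 2 + 2 * (X * Z))) :
    X ≤ (5 + 2 * c) * Real.sqrt (A * Q) := by
  have hQ : 0 ≤ Q := hX.trans hXQ
  set K := Real.sqrt (A * Q) with hKdef
  have hK : 0 ≤ K := Real.sqrt_nonneg _
  have hK2 : K ^ 2 = A * Q := Real.sq_sqrt (mul_nonneg hA hQ)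
  have hcoef : (1:ℝ) ≤ 5 + 2 * c := by linarith
  rcases le_total X A with hXA | hAX
  · have h1 : X ^ 2 ≤ K ^ 2 := by nlinarith
    have h2 : X ≤ K := by nlinarith
    nlinarith
  · have b1 : c * A ^ 2 + 2 * (A * X) ≤ (c + 2) * (A * X) := by
      nlinarith [mul_nonneg (mul_nonneg hc.le hA) (sub_nonneg.2 hAX)]
    have b2 : c * X ^ 2 + 2 * (X * Z) ≤ (c + 2) * (X * Q) := by
      nlinarith [mul_nonneg (mul_nonneg hc.le hX) (sub_nonneg.2 hXQ),
        mul_nonneg hX (sub_nonneg.2 hZQ)]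
    have s1 : Real.sqrt (c * A ^ 2 + 2 * (A * X)) ≤ Real.sqrt ((c + 2) * (A * X)) :=
      Real.sqrt_le_sqrt b1
    have s2 : Real.sqrt (c * X ^ 2 + 2 * (X * Z)) ≤ Real.sqrt ((c + 2) * (X * Q)) :=
      Real.sqrt_le_sqrt b2
    have hprod : Real.sqrt ((c + 2) * (A * X)) * Real.sqrt ((c + 2) * (X * Q)) =
        (c + 2) * X * K := sqrt_prod_eq (by linarith) hA hX hQ
    have key2 : X ^ 2 ≤ A * Z + 2 * ((c + 2) * X * K) := by
      have hm : Real.sqrt (c * A ^ 2 + 2 * (A * X)) * Real.sqrt (c * X ^ 2 + 2 * (X * Z)) ≤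
          (c + 2) * X * K := by
        rw [← hprod]
        exact mul_le_mul s1 s2 (Real.sqrt_nonneg _) (Real.sqrt_nonneg _)
      nlinarith
    have key3 : X ^ 2 ≤ K ^ 2 + (2 * c + 4) * X * K := by nlinarith
    by_contra hcon
    push_neg at hcon
    have hXpos : 0 < X := lt_of_le_of_lt (by positivity) hcon
    have h5 : K * X ≥ K * K := by nlinarith
    nlinarith [mul_lt_mul_of_pos_right hcon hXpos, h5, key3]
end InterpAlg

section Interp

variable {L h : ℝ}

lemma interp_z (hL : 0 < L) (hh : 0 < h) {u : ℝ × ℝ → ℝ} (hu : ContDiff ℝ 2 u) {Q : ℝ}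
    (hAQ : Real.sqrt (II L h fun p => u p ^ 2) ≤ Q)
    (hXQ : Real.sqrt (II L h fun p => pdz u p ^ 2) ≤ Q)
    (hZQ : Real.sqrt (II L h fun p => pdz (pdz u) p ^ 2) ≤ Q) :
    Real.sqrt (II L h fun p => pdz u p ^ 2) ≤
      (5 + 2 * (1/h)) * Real.sqrt (Real.sqrt (II L h fun p => u p ^ 2) * Q) := by
  have hu2 : ContDiff ℝ ((1:ℕ)+1) u := by exact_mod_cast hu
  have hud : Differentiable ℝ u := hu.differentiable (by norm_num)
  have huc : Continuous u := hud.continuous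
  have huz1 : ContDiff ℝ (1:ℕ) (pdz u) := contDiff_pdz hu2
  have huzd : Differentiable ℝ (pdz u) := huz1.differentiable (by norm_num)
  have huzc : Continuous (pdz u) := huzd.continuous
  have huzzc : Continuous (pdz (pdz u)) := cont_pdz (by exact_mod_cast huz1)
  set A := Real.sqrt (II L h fun p => u p ^ 2) with hAdef
  set X := Real.sqrt (II L h fun p => pdz u p ^ 2) with hXdef
  set Z := Real.sqrt (II L h fun p => pdz (pdz u) p ^ 2) with hZdef
  have hA0 : 0 ≤ A := Real.sqrt_nonneg _
  have hX0 : 0 ≤ X := Real.sqrt_nonneg _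
  have hZ0 : 0 ≤ Z := Real.sqrt_nonneg _
  have sqA : A ^ 2 = II L h fun p => u p ^ 2 :=
    Real.sq_sqrt (II_nonneg hL hh fun p => sq_nonneg _)
  have sqX : X ^ 2 = II L h fun p => pdz u p ^ 2 :=
    Real.sq_sqrt (II_nonneg hL hh fun p => sq_nonneg _)
  have sqZ : Z ^ 2 = II L h fun p => pdz (pdz u) p ^ 2 :=
    Real.sq_sqrt (II_nonneg hL hh fun p => sq_nonneg _)
  -- the mixed term
  have habs3 : -(II L h fun p => u p * pdz (pdz u) p) ≤ A * Z := by
    have h1 := abs_II_le hL hh (huc.fun_mul huzzc)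
    have h2 : (fun p : ℝ × ℝ => |u p * pdz (pdz u) p|) =
        fun p => |u p| * |pdz (pdz u) p| := funext fun p => abs_mul _ _
    rw [h2] at h1
    have h3 := cs2d hL hh huc huzzc
    rw [← sqA, ← sqZ] at h3
    rw [Real.sqrt_sq hA0, Real.sqrt_sq hZ0] at h3
    calc -(II L h fun p => u p * pdz (pdz u) p) ≤ |II L h fun p => u p * pdz (pdz u) p| :=
          neg_le_abs _
      _ ≤ II L h fun p => |u p| * |pdz (pdz u) p| := h1
      _ ≤ A * Z := h3
  -- boundary bound, uniform in z0
  have bnd : ∀ z0 : ℝ, z0 ∈ Icc (-h) (0:ℝ) →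
      |∫ x in (0:ℝ)..L, u (x, z0) * pdz u (x, z0)| ≤
        Real.sqrt ((1/h) * A ^ 2 + 2 * (A * X)) *
          Real.sqrt ((1/h) * X ^ 2 + 2 * (X * Z)) := by
    intro z0 hz0
    have step1 : |∫ x in (0:ℝ)..L, u (x, z0) * pdz u (x, z0)| ≤
        ∫ x in (0:ℝ)..L, |u (x, z0)| * |pdz u (x, z0)| := by
      refine (intervalIntegral.abs_integral_le_integral_abs hL.le).trans ?_
      apply le_of_eq
      apply intervalIntegral.integral_congr
      intro x _
      exact abs_mul _ _
    refine step1.trans ?_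
    have step2 := cs1d hL.le (cont_outer huc z0) (cont_outer huzc z0)
    refine step2.trans ?_
    have tr1 : (∫ x in (0:ℝ)..L, u (x, z0) ^ 2) ≤ (1/h) * A ^ 2 + 2 * (A * X) := by
      have t1 := trace_pt_z hL hh hud huzc hz0
      have c1 := cs2d hL hh huc huzc
      rw [← sqA, ← sqX, Real.sqrt_sq hA0, Real.sqrt_sq hX0] at c1
      rw [sqA]
      nlinarith [c1, t1]
    have tr2 : (∫ x in (0:ℝ)..L, pdz u (x, z0) ^ 2) ≤ (1/h) * X ^ 2 + 2 * (X * Z) := by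
      have t1 := trace_pt_z hL hh huzd huzzc hz0
      have c1 := cs2d hL hh huzc huzzc
      rw [← sqX, ← sqZ, Real.sqrt_sq hX0, Real.sqrt_sq hZ0] at c1
      rw [sqX]
      nlinarith [c1, t1]
    exact mul_le_mul (Real.sqrt_le_sqrt tr1) (Real.sqrt_le_sqrt tr2)
      (Real.sqrt_nonneg _) (Real.sqrt_nonneg _)
  have hz0mem : (0:ℝ) ∈ Icc (-h) (0:ℝ) := ⟨by linarith, le_refl _⟩
  have hzhmem : (-h) ∈ Icc (-h) (0:ℝ) := ⟨le_refl _, by linarith⟩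
  have hparts := partsz hL hh hud huzd huzzc
  have key : X ^ 2 ≤ A * Z +
      2 * Real.sqrt ((1/h) * A ^ 2 + 2 * (A * X)) *
        Real.sqrt ((1/h) * X ^ 2 + 2 * (X * Z)) := by
    conv_lhs => rw [sqX, hparts]
    have b0 := bnd 0 hz0mem
    have bh := bnd (-h) hzhmem
    have l0 := (le_abs_self (∫ x in (0:ℝ)..L, u (x, 0) * pdz u (x, 0))).trans b0
    have lh := (neg_le_abs (∫ x in (0:ℝ)..L, u (x, -h) * pdz u (x, -h))).trans bh
    linarith [habs3]
  exact interp_alg (c := 1/h) (by positivity) hA0 hX0 hZ0 hAQ hXQ hZQ key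

lemma interp_x (hL : 0 < L) (hh : 0 < h) {u : ℝ × ℝ → ℝ} (hu : ContDiff ℝ 2 u) {Q : ℝ}
    (hAQ : Real.sqrt (II L h fun p => u p ^ 2) ≤ Q)
    (hXQ : Real.sqrt (II L h fun p => pdx u p ^ 2) ≤ Q)
    (hZQ : Real.sqrt (II L h fun p => pdx (pdx u) p ^ 2) ≤ Q) :
    Real.sqrt (II L h fun p => pdx u p ^ 2) ≤
      (5 + 2 * (1/L)) * Real.sqrt (Real.sqrt (II L h fun p => u p ^ 2) * Q) := by
  have hu2 : ContDiff ℝ ((1:ℕ)+1) u := by exact_mod_cast hu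
  have hud : Differentiable ℝ u := hu.differentiable (by norm_num)
  have huc : Continuous u := hud.continuous
  have hux1 : ContDiff ℝ (1:ℕ) (pdx u) := contDiff_pdx hu2
  have huxd : Differentiable ℝ (pdx u) := hux1.differentiable (by norm_num)
  have huxc : Continuous (pdx u) := huxd.continuous
  have huxxc : Continuous (pdx (pdx u)) := cont_pdx (by exact_mod_cast hux1)
  set A := Real.sqrt (II L h fun p => u p ^ 2) with hAdef
  set X := Real.sqrt (II L h fun p => pdx u p ^ 2) with hXdef
  set Z := Real.sqrt (II L h fun p => pdx (pdx u) p ^ 2) with hZdef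
  have hA0 : 0 ≤ A := Real.sqrt_nonneg _
  have hX0 : 0 ≤ X := Real.sqrt_nonneg _
  have hZ0 : 0 ≤ Z := Real.sqrt_nonneg _
  have sqA : A ^ 2 = II L h fun p => u p ^ 2 :=
    Real.sq_sqrt (II_nonneg hL hh fun p => sq_nonneg _)
  have sqX : X ^ 2 = II L h fun p => pdx u p ^ 2 :=
    Real.sq_sqrt (II_nonneg hL hh fun p => sq_nonneg _)
  have sqZ : Z ^ 2 = II L h fun p => pdx (pdx u) p ^ 2 :=
    Real.sq_sqrt (II_nonneg hL hh fun p => sq_nonneg _)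
  have habs3 : -(II L h fun p => u p * pdx (pdx u) p) ≤ A * Z := by
    have h1 := abs_II_le hL hh (huc.fun_mul huxxc)
    have h2 : (fun p : ℝ × ℝ => |u p * pdx (pdx u) p|) =
        fun p => |u p| * |pdx (pdx u) p| := funext fun p => abs_mul _ _
    rw [h2] at h1
    have h3 := cs2d hL hh huc huxxc
    rw [← sqA, ← sqZ] at h3
    rw [Real.sqrt_sq hA0, Real.sqrt_sq hZ0] at h3
    calc -(II L h fun p => u p * pdx (pdx u) p) ≤ |II L h fun p => u p * pdx (pdx u) p| :=
          neg_le_abs _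
      _ ≤ II L h fun p => |u p| * |pdx (pdx u) p| := h1
      _ ≤ A * Z := h3
  have bnd : ∀ x0 : ℝ, x0 ∈ Icc (0:ℝ) L →
      |∫ t in (-h)..(0:ℝ), u (x0, t) * pdx u (x0, t)| ≤
        Real.sqrt ((1/L) * A ^ 2 + 2 * (A * X)) *
          Real.sqrt ((1/L) * X ^ 2 + 2 * (X * Z)) := by
    intro x0 hx0
    have step1 : |∫ t in (-h)..(0:ℝ), u (x0, t) * pdx u (x0, t)| ≤
        ∫ t in (-h)..(0:ℝ), |u (x0, t)| * |pdx u (x0, t)| := by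
      refine (intervalIntegral.abs_integral_le_integral_abs (by linarith)).trans ?_
      apply le_of_eq
      apply intervalIntegral.integral_congr
      intro t _
      exact abs_mul _ _
    refine step1.trans ?_
    have step2 := cs1d (by linarith : (-h:ℝ) ≤ 0) (cont_inner huc x0) (cont_inner huxc x0)
    refine step2.trans ?_
    have tr1 : (∫ t in (-h)..(0:ℝ), u (x0, t) ^ 2) ≤ (1/L) * A ^ 2 + 2 * (A * X) := by
      have t1 := trace_pt_x hL hh hud huxc hx0
      have c1 := cs2d hL hh huc huxc
      rw [← sqA, ← sqX, Real.sqrt_sq hA0, Real.sqrt_sq hX0] at c1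
      rw [sqA]
      nlinarith [c1, t1]
    have tr2 : (∫ t in (-h)..(0:ℝ), pdx u (x0, t) ^ 2) ≤ (1/L) * X ^ 2 + 2 * (X * Z) := by
      have t1 := trace_pt_x hL hh huxd huxxc hx0
      have c1 := cs2d hL hh huxc huxxc
      rw [← sqX, ← sqZ, Real.sqrt_sq hX0, Real.sqrt_sq hZ0] at c1
      rw [sqX]
      nlinarith [c1, t1]
    exact mul_le_mul (Real.sqrt_le_sqrt tr1) (Real.sqrt_le_sqrt tr2)
      (Real.sqrt_nonneg _) (Real.sqrt_nonneg _)
  have hx0mem : (0:ℝ) ∈ Icc (0:ℝ) L := ⟨le_refl _, hL.le⟩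
  have hxLmem : L ∈ Icc (0:ℝ) L := ⟨hL.le, le_refl _⟩
  have hparts := partsx hL hh hud huxd huxxc
  have key : X ^ 2 ≤ A * Z +
      2 * Real.sqrt ((1/L) * A ^ 2 + 2 * (A * X)) *
        Real.sqrt ((1/L) * X ^ 2 + 2 * (X * Z)) := by
    conv_lhs => rw [sqX, hparts]
    have b0 := bnd L hxLmem
    have bh := bnd 0 hx0mem
    have l0 := (le_abs_self (∫ t in (-h)..(0:ℝ), u (L, t) * pdx u (L, t))).trans b0
    have lh := (neg_le_abs (∫ t in (-h)..(0:ℝ), u (0, t) * pdx u (0, t))).trans bh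
    linarith [habs3]
  exact interp_alg (c := 1/L) (by positivity) hA0 hX0 hZ0 hAQ hXQ hZQ key

end Interp

noncomputable def CAg (L h : ℝ) : ℝ :=
  (1/h) * (1/L + 2 * (5 + 2 * (1/L))) +
    2 * Real.sqrt ((1/L + 2 * (5 + 2 * (1/L))) *
      ((5 + 2 * (1/h)) ^ 2 * (1/L) + 2 * (5 + 2 * (1/h))))

lemma CAg_pos {L h : ℝ} (hL : 0 < L) (hh : 0 < h) : 0 < CAg L h := by
  have h1 : 0 < (1/h) * (1/L + 2 * (5 + 2 * (1/L))) := by positivity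
  have h2 : 0 ≤ Real.sqrt ((1/L + 2 * (5 + 2 * (1/L))) *
      ((5 + 2 * (1/h)) ^ 2 * (1/L) + 2 * (5 + 2 * (1/h)))) := Real.sqrt_nonneg _
  unfold CAg
  linarith

set_option maxHeartbeats 1000000 in
lemma agmon_alg {L h : ℝ} (hL : 0 < L) (hh : 0 < h)
    {A ax az m Q Ax Cx T U : ℝ}
    (hA0 : 0 ≤ A) (hax0 : 0 ≤ ax) (haz0 : 0 ≤ az) (hm0 : 0 ≤ m) (hQ0 : 0 ≤ Q)
    (hAx0 : 0 ≤ Ax) (hCx0 : 0 ≤ Cx)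
    (hAQ : A ≤ Q) (hmQ : m ≤ Q)
    (haxK : ax ≤ (5 + 2 * (1/L)) * Real.sqrt (A * Q))
    (hazK : az ≤ (5 + 2 * (1/h)) * Real.sqrt (A * Q))
    (hAxb : Ax ≤ (1/L) * A ^ 2 + 2 * (A * ax))
    (hCxb : Cx ≤ (1/L) * az ^ 2 + 2 * (az * m))
    (hpt : U ≤ (1/h) * Ax + 2 * T)
    (hcs : T ≤ Real.sqrt Ax * Real.sqrt Cx) :
    U ≤ CAg L h * (A * Q) := by
  obtain ⟨K, hKdef⟩ : ∃ K', K' = Real.sqrt (A * Q) := ⟨_, rfl⟩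
  have hK0 : 0 ≤ K := hKdef ▸ Real.sqrt_nonneg _
  have hK2 : K ^ 2 = A * Q := by rw [hKdef]; exact Real.sq_sqrt (mul_nonneg hA0 hQ0)
  rw [← hKdef] at haxK hazK
  have hAK : A ≤ K := by
    have : A = Real.sqrt (A ^ 2) := (Real.sqrt_sq hA0).symm
    rw [this, hKdef]
    exact Real.sqrt_le_sqrt (by nlinarith)
  have hKQ : K ≤ Q := by
    rw [hKdef]
    calc Real.sqrt (A * Q) ≤ Real.sqrt (Q * Q) := Real.sqrt_le_sqrt (by nlinarith)
      _ = Q := Real.sqrt_mul_self hQ0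
  obtain ⟨l', hl'⟩ : ∃ l', l' = 1/L := ⟨_, rfl⟩
  obtain ⟨h', hh'⟩ : ∃ h'', h'' = 1/h := ⟨_, rfl⟩
  have hl'0 : 0 < l' := by rw [hl']; positivity
  have hh'0 : 0 < h' := by rw [hh']; positivity
  obtain ⟨cx, hcx⟩ : ∃ c, c = 5 + 2 * l' := ⟨_, rfl⟩
  obtain ⟨cz, hcz⟩ : ∃ c, c = 5 + 2 * h' := ⟨_, rfl⟩
  rw [← hl'] at haxK hAxb hCxb
  rw [← hh'] at hazK hpt
  rw [← hcx] at haxK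
  rw [← hcz] at hazK
  have hcx0 : 0 < cx := by rw [hcx]; linarith
  have hcz0 : 0 < cz := by rw [hcz]; linarith
  have hAxb2 : Ax ≤ (l' + 2 * cx) * (A * K) := by
    have hp1 : l' * (A * A) ≤ l' * (A * K) :=
      mul_le_mul_of_nonneg_left (mul_le_mul_of_nonneg_left hAK hA0) hl'0.le
    have hp2 : A * ax ≤ A * (cx * K) := mul_le_mul_of_nonneg_left haxK hA0
    nlinarith [hAxb, hp1, hp2]
  have hCxb2 : Cx ≤ (cz ^ 2 * l' + 2 * cz) * (K * Q) := by
    have e0 : az * az ≤ (cz * K) * (cz * K) :=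
      mul_le_mul hazK hazK haz0 (by positivity)
    have e0' : cz ^ 2 * (K * K) ≤ cz ^ 2 * (K * Q) :=
      mul_le_mul_of_nonneg_left (mul_le_mul_of_nonneg_left hKQ hK0) (by positivity)
    have e1 : az ^ 2 ≤ cz ^ 2 * (K * Q) := by nlinarith [e0, e0']
    have e2 : az * m ≤ cz * (K * Q) := by
      calc az * m ≤ (cz * K) * Q := mul_le_mul hazK hmQ hm0 (by positivity)
        _ = cz * (K * Q) := by ring
    have e3 : l' * az ^ 2 ≤ l' * (cz ^ 2 * (K * Q)) :=
      mul_le_mul_of_nonneg_left e1 hl'0.le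
    nlinarith [hCxb, e3, e2]
  have hsq : Real.sqrt Ax * Real.sqrt Cx ≤
      Real.sqrt ((l' + 2 * cx) * (cz ^ 2 * l' + 2 * cz)) * K ^ 2 := by
    have s1 : Real.sqrt Ax ≤ Real.sqrt ((l' + 2 * cx) * (A * K)) := Real.sqrt_le_sqrt hAxb2
    have s2 : Real.sqrt Cx ≤ Real.sqrt ((cz ^ 2 * l' + 2 * cz) * (K * Q)) :=
      Real.sqrt_le_sqrt hCxb2
    have s3 : Real.sqrt ((l' + 2 * cx) * (A * K)) *
        Real.sqrt ((cz ^ 2 * l' + 2 * cz) * (K * Q)) =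
        Real.sqrt ((l' + 2 * cx) * (cz ^ 2 * l' + 2 * cz)) * K ^ 2 := by
      rw [← Real.sqrt_mul (by positivity)]
      have e : (l' + 2 * cx) * (A * K) * ((cz ^ 2 * l' + 2 * cz) * (K * Q)) =
          ((l' + 2 * cx) * (cz ^ 2 * l' + 2 * cz)) * ((A * Q) * K ^ 2) := by ring
      rw [e, ← hK2]
      have e2 : K ^ 2 * K ^ 2 = (K ^ 2) ^ 2 := by ring
      rw [e2, Real.sqrt_mul (by positivity), Real.sqrt_sq (sq_nonneg K)]
    calc Real.sqrt Ax * Real.sqrt Cx ≤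
        Real.sqrt ((l' + 2 * cx) * (A * K)) *
          Real.sqrt ((cz ^ 2 * l' + 2 * cz) * (K * Q)) :=
          mul_le_mul s1 s2 (Real.sqrt_nonneg _) (Real.sqrt_nonneg _)
      _ = _ := s3
  have hAxK2 : h' * Ax ≤ h' * (l' + 2 * cx) * K ^ 2 := by
    have hAK2 : A * K ≤ K ^ 2 := by nlinarith [mul_le_mul_of_nonneg_right hAK hK0]
    have h2 : Ax ≤ (l' + 2 * cx) * K ^ 2 :=
      le_trans hAxb2 (mul_le_mul_of_nonneg_left hAK2 (by positivity))
    have h4 := mul_le_mul_of_nonneg_left h2 hh'0.le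
    nlinarith [h4]
  have final : U ≤ CAg L h * K ^ 2 := by
    have hCAg : CAg L h = h' * (l' + 2 * cx) +
        2 * Real.sqrt ((l' + 2 * cx) * (cz ^ 2 * l' + 2 * cz)) := by
      rw [CAg, hcx, hcz, hl', hh']
    rw [hCAg]
    nlinarith [hpt, hcs, hsq, hAxK2]
  rw [hK2] at final
  exact final

lemma agmon {L h : ℝ} (hL : 0 < L) (hh : 0 < h) {u : ℝ × ℝ → ℝ} (hu : ContDiff ℝ 2 u)
    {Q : ℝ}
    (hAQ : Real.sqrt (II L h fun p => u p ^ 2) ≤ Q)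
    (haxQ : Real.sqrt (II L h fun p => pdx u p ^ 2) ≤ Q)
    (hazQ : Real.sqrt (II L h fun p => pdz u p ^ 2) ≤ Q)
    (haxxQ : Real.sqrt (II L h fun p => pdx (pdx u) p ^ 2) ≤ Q)
    (haxzQ : Real.sqrt (II L h fun p => pdx (pdz u) p ^ 2) ≤ Q)
    (hazzQ : Real.sqrt (II L h fun p => pdz (pdz u) p ^ 2) ≤ Q)
    {x z : ℝ} (hx : x ∈ Icc (0:ℝ) L) (hz : z ∈ Icc (-h) (0:ℝ)) :
    u (x, z) ^ 2 ≤ CAg L h * (Real.sqrt (II L h fun p => u p ^ 2) * Q) := by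
  have hu2 : ContDiff ℝ ((1:ℕ)+1) u := by exact_mod_cast hu
  have hud : Differentiable ℝ u := hu.differentiable (by norm_num)
  have huc : Continuous u := hud.continuous
  have hux1 : ContDiff ℝ (1:ℕ) (pdx u) := contDiff_pdx hu2
  have huxd : Differentiable ℝ (pdx u) := hux1.differentiable (by norm_num)
  have huxc : Continuous (pdx u) := huxd.continuous
  have huz1 : ContDiff ℝ (1:ℕ) (pdz u) := contDiff_pdz hu2
  have huzd : Differentiable ℝ (pdz u) := huz1.differentiable (by norm_num)
  have huzc : Continuous (pdz u) := huzd.continuous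
  have huxzc : Continuous (pdx (pdz u)) := cont_pdx (by exact_mod_cast huz1)
  set A := Real.sqrt (II L h fun p => u p ^ 2) with hAdef
  set ax := Real.sqrt (II L h fun p => pdx u p ^ 2) with haxdef
  set az := Real.sqrt (II L h fun p => pdz u p ^ 2) with hazdef
  set m := Real.sqrt (II L h fun p => pdx (pdz u) p ^ 2) with hmdef
  have hA0 : 0 ≤ A := Real.sqrt_nonneg _
  have hax0 : 0 ≤ ax := Real.sqrt_nonneg _
  have haz0 : 0 ≤ az := Real.sqrt_nonneg _
  have hm0 : 0 ≤ m := Real.sqrt_nonneg _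
  have hQ0 : 0 ≤ Q := hA0.trans hAQ
  have sqA : A ^ 2 = II L h fun p => u p ^ 2 :=
    Real.sq_sqrt (II_nonneg hL hh fun p => sq_nonneg _)
  have sqax : ax ^ 2 = II L h fun p => pdx u p ^ 2 :=
    Real.sq_sqrt (II_nonneg hL hh fun p => sq_nonneg _)
  have sqaz : az ^ 2 = II L h fun p => pdz u p ^ 2 :=
    Real.sq_sqrt (II_nonneg hL hh fun p => sq_nonneg _)
  have haxK : ax ≤ (5 + 2 * (1/L)) * Real.sqrt (A * Q) := interp_x hL hh hu hAQ haxQ haxxQ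
  have hazK : az ≤ (5 + 2 * (1/h)) * Real.sqrt (A * Q) := interp_z hL hh hu hAQ hazQ hazzQ
  set Ax := ∫ t in (-h)..(0:ℝ), u (x, t) ^ 2 with hAxdef
  set Cx := ∫ t in (-h)..(0:ℝ), pdz u (x, t) ^ 2 with hCxdef
  have hAx0 : 0 ≤ Ax := intervalIntegral.integral_nonneg (by linarith) fun t _ => sq_nonneg _
  have hCx0 : 0 ≤ Cx := intervalIntegral.integral_nonneg (by linarith) fun t _ => sq_nonneg _
  have hpt : u (x, z) ^ 2 ≤ (1/h) * Ax +
      2 * ∫ t in (-h)..(0:ℝ), |u (x, t)| * |pdz u (x, t)| := by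
    have := sup1d (a := -h) (b := 0) (by linarith)
      (g := fun t => u (x, t)) (g' := fun t => pdz u (x, t))
      (fun t => hasDerivAt_slice_z hud x t) (cont_inner huzc x) (x := z) hz
    simpa [sub_neg_eq_add, zero_add] using this
  have hcs : (∫ t in (-h)..(0:ℝ), |u (x, t)| * |pdz u (x, t)|) ≤
      Real.sqrt Ax * Real.sqrt Cx :=
    cs1d (by linarith) (cont_inner huc x) (cont_inner huzc x)
  have hAxb : Ax ≤ (1/L) * A ^ 2 + 2 * (A * ax) := by
    have t1 := trace_pt_x hL hh hud huxc hx
    have c1 := cs2d hL hh huc huxc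
    rw [← sqA, ← sqax, Real.sqrt_sq hA0, Real.sqrt_sq hax0] at c1
    rw [← sqA] at t1
    rw [hAxdef]
    linarith [t1, c1]
  have hCxb : Cx ≤ (1/L) * az ^ 2 + 2 * (az * m) := by
    have t1 := trace_pt_x hL hh huzd huxzc hx
    have c1 := cs2d hL hh huzc huxzc
    rw [← sqaz, Real.sqrt_sq haz0] at c1
    rw [← sqaz] at t1
    rw [hCxdef]
    linarith [t1, c1]
  exact agmon_alg hL hh hA0 hax0 haz0 hm0 hQ0 hAx0 hCx0 hAQ haxzQ haxK hazK hAxb hCxb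
    hpt hcs

lemma le_sqrt_of_sq_le {a s : ℝ} (ha : 0 ≤ a) (hle : a ^ 2 ≤ s) : a ≤ Real.sqrt s := by
  calc a = Real.sqrt (a ^ 2) := (Real.sqrt_sq ha).symm
    _ ≤ Real.sqrt s := Real.sqrt_le_sqrt hle

theorem stmt13 (L h : ℝ) (hL : 0 < L) (hh : 0 < h) :
    ∃ c > 0, ∀ u φ ψ : ℝ × ℝ → ℝ,
      ContDiff ℝ 2 u → ContDiff ℝ 1 φ → Continuous ψ →
      |∫ p in dom L h, u p * pdx φ p * ψ p| ≤
        c * l2 L h u ^ ((1:ℝ)/2) * h2n L h u ^ ((1:ℝ)/2) * l2 L h (pdx φ) * l2 L h ψ := by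
  refine ⟨Real.sqrt (CAg L h), Real.sqrt_pos.2 (CAg_pos hL hh), ?_⟩
  intro u φ ψ hu hφ hψ
  have huc : Continuous u := hu.continuous
  have hφxc : Continuous (pdx φ) := cont_pdx hφ
  have hu2 : ContDiff ℝ ((1:ℕ)+1) u := by exact_mod_cast hu
  have hux1 : ContDiff ℝ (1:ℕ) (pdx u) := contDiff_pdx hu2
  have huz1 : ContDiff ℝ (1:ℕ) (pdz u) := contDiff_pdz hu2
  have huxc : Continuous (pdx u) := (hux1.differentiable (by norm_num)).continuous
  have huzc : Continuous (pdz u) := (huz1.differentiable (by norm_num)).continuous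
  have huxxc : Continuous (pdx (pdx u)) := cont_pdx (by exact_mod_cast hux1)
  have huxzc : Continuous (pdx (pdz u)) := cont_pdx (by exact_mod_cast huz1)
  have huzzc : Continuous (pdz (pdz u)) := cont_pdz (by exact_mod_cast huz1)
  have l2II : ∀ f : ℝ × ℝ → ℝ, Continuous f →
      l2 L h f = Real.sqrt (II L h fun p => f p ^ 2) := by
    intro f hf
    unfold l2 II
    rw [set_to_iter hL hh (hf.fun_pow 2)]
  have hP0 : 0 ≤ l2 L h u := Real.sqrt_nonneg _
  have hQ0 : 0 ≤ h2n L h u := Real.sqrt_nonneg _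
  have h1n0 : 0 ≤ h1n L h u := Real.sqrt_nonneg _
  have hux0 : 0 ≤ l2 L h (pdx u) := Real.sqrt_nonneg _
  have huz0 : 0 ≤ l2 L h (pdz u) := Real.sqrt_nonneg _
  have huxx0 : 0 ≤ l2 L h (pdx (pdx u)) := Real.sqrt_nonneg _
  have huxz0 : 0 ≤ l2 L h (pdx (pdz u)) := Real.sqrt_nonneg _
  have huzz0 : 0 ≤ l2 L h (pdz (pdz u)) := Real.sqrt_nonneg _
  -- all norms bounded by h2n
  have bh1 : h1n L h u ≤ h2n L h u := by
    unfold h2n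
    apply le_sqrt_of_sq_le h1n0
    nlinarith [sq_nonneg (l2 L h (pdx (pdx u))),
      sq_nonneg (l2 L h (pdx (pdz u))), sq_nonneg (l2 L h (pdz (pdz u)))]
  have bu : l2 L h u ≤ h2n L h u := by
    refine le_trans ?_ bh1
    unfold h1n
    apply le_sqrt_of_sq_le hP0
    nlinarith [sq_nonneg (l2 L h (pdx u)), sq_nonneg (l2 L h (pdz u))]
  have bux : l2 L h (pdx u) ≤ h2n L h u := by
    refine le_trans ?_ bh1
    unfold h1n
    apply le_sqrt_of_sq_le hux0
    nlinarith [sq_nonneg (l2 L h u), sq_nonneg (l2 L h (pdz u))]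
  have buz : l2 L h (pdz u) ≤ h2n L h u := by
    refine le_trans ?_ bh1
    unfold h1n
    apply le_sqrt_of_sq_le huz0
    nlinarith [sq_nonneg (l2 L h u), sq_nonneg (l2 L h (pdx u))]
  have buxx : l2 L h (pdx (pdx u)) ≤ h2n L h u := by
    unfold h2n
    apply le_sqrt_of_sq_le huxx0
    nlinarith [sq_nonneg (h1n L h u),
      sq_nonneg (l2 L h (pdx (pdz u))), sq_nonneg (l2 L h (pdz (pdz u)))]
  have buxz : l2 L h (pdx (pdz u)) ≤ h2n L h u := by
    unfold h2n
    apply le_sqrt_of_sq_le huxz0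
    nlinarith [sq_nonneg (h1n L h u),
      sq_nonneg (l2 L h (pdx (pdx u))), sq_nonneg (l2 L h (pdz (pdz u)))]
  have buzz : l2 L h (pdz (pdz u)) ≤ h2n L h u := by
    unfold h2n
    apply le_sqrt_of_sq_le huzz0
    nlinarith [sq_nonneg (h1n L h u),
      sq_nonneg (l2 L h (pdx (pdx u))), sq_nonneg (l2 L h (pdx (pdz u)))]
  -- translate to II-form for agmon
  have hAQ : Real.sqrt (II L h fun p => u p ^ 2) ≤ h2n L h u := by
    rw [← l2II u huc]; exact bu
  have haxQ : Real.sqrt (II L h fun p => pdx u p ^ 2) ≤ h2n L h u := by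
    rw [← l2II (pdx u) huxc]; exact bux
  have hazQ : Real.sqrt (II L h fun p => pdz u p ^ 2) ≤ h2n L h u := by
    rw [← l2II (pdz u) huzc]; exact buz
  have haxxQ : Real.sqrt (II L h fun p => pdx (pdx u) p ^ 2) ≤ h2n L h u := by
    rw [← l2II (pdx (pdx u)) huxxc]; exact buxx
  have haxzQ : Real.sqrt (II L h fun p => pdx (pdz u) p ^ 2) ≤ h2n L h u := by
    rw [← l2II (pdx (pdz u)) huxzc]; exact buxz
  have hazzQ : Real.sqrt (II L h fun p => pdz (pdz u) p ^ 2) ≤ h2n L h u := by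
    rw [← l2II (pdz (pdz u)) huzzc]; exact buzz
  set M := Real.sqrt (CAg L h * (l2 L h u * h2n L h u)) with hMdef
  have hM0 : 0 ≤ M := Real.sqrt_nonneg _
  have hM2 : M ^ 2 = CAg L h * (l2 L h u * h2n L h u) :=
    Real.sq_sqrt (mul_nonneg (CAg_pos hL hh).le (mul_nonneg hP0 hQ0))
  have hsup : ∀ p ∈ dom L h, |u p| ≤ M := by
    intro p hp
    have hx : p.1 ∈ Icc (0:ℝ) L := Ioo_subset_Icc_self hp.1
    have hz : p.2 ∈ Icc (-h) (0:ℝ) := Ioo_subset_Icc_self hp.2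
    have hag := agmon hL hh hu hAQ haxQ hazQ haxxQ haxzQ hazzQ hx hz
    have hag' : u p ^ 2 ≤ CAg L h * (Real.sqrt (II L h fun p => u p ^ 2) * h2n L h u) := hag
    rw [← l2II u huc] at hag'
    rw [← hM2] at hag'
    calc |u p| = Real.sqrt (u p ^ 2) := (Real.sqrt_sq_eq_abs _).symm
      _ ≤ Real.sqrt (M ^ 2) := Real.sqrt_le_sqrt hag'
      _ = M := Real.sqrt_sq hM0
  -- main chain
  have hintc : Continuous fun p => u p * pdx φ p * ψ p := (huc.mul hφxc).mul hψ
  have step1 : |∫ p in dom L h, u p * pdx φ p * ψ p| ≤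
      ∫ p in dom L h, |u p| * |pdx φ p| * |ψ p| := by
    simpa [Real.norm_eq_abs, abs_mul] using
      MeasureTheory.norm_integral_le_integral_norm
        (μ := volume.restrict (dom L h)) (fun p => u p * pdx φ p * ψ p)
  have hmeas : MeasurableSet (dom L h) := (measurableSet_Ioo.prod measurableSet_Ioo)
  have step2 : (∫ p in dom L h, |u p| * |pdx φ p| * |ψ p|) ≤
      ∫ p in dom L h, M * (|pdx φ p| * |ψ p|) := by
    apply MeasureTheory.setIntegral_mono_on
      (integrableOn_dom ((huc.abs.mul hφxc.abs).mul hψ.abs))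
      (integrableOn_dom (continuous_const.mul (hφxc.abs.mul hψ.abs)))
      hmeas
    intro p hp
    rw [mul_assoc]
    exact mul_le_mul_of_nonneg_right (hsup p hp) (mul_nonneg (abs_nonneg _) (abs_nonneg _))
  have step3 : (∫ p in dom L h, M * (|pdx φ p| * |ψ p|)) =
      M * ∫ p in dom L h, |pdx φ p| * |ψ p| :=
    MeasureTheory.integral_const_mul M _
  have step4 : (∫ p in dom L h, |pdx φ p| * |ψ p|) ≤ l2 L h (pdx φ) * l2 L h ψ := by
    have e : (∫ p in dom L h, |pdx φ p| * |ψ p|) =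
        II L h fun p => |pdx φ p| * |ψ p| := by
      unfold II
      exact set_to_iter hL hh (hφxc.abs.mul hψ.abs)
    rw [e, l2II (pdx φ) hφxc, l2II ψ hψ]
    exact cs2d hL hh hφxc hψ
  have hfinal : |∫ p in dom L h, u p * pdx φ p * ψ p| ≤
      M * (l2 L h (pdx φ) * l2 L h ψ) := by
    have h4 : M * (∫ p in dom L h, |pdx φ p| * |ψ p|) ≤
        M * (l2 L h (pdx φ) * l2 L h ψ) := mul_le_mul_of_nonneg_left step4 hM0
    calc |∫ p in dom L h, u p * pdx φ p * ψ p| ≤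
        ∫ p in dom L h, |u p| * |pdx φ p| * |ψ p| := step1
      _ ≤ ∫ p in dom L h, M * (|pdx φ p| * |ψ p|) := step2
      _ = M * ∫ p in dom L h, |pdx φ p| * |ψ p| := step3
      _ ≤ M * (l2 L h (pdx φ) * l2 L h ψ) := h4
  have hMfact : M = Real.sqrt (CAg L h) * Real.sqrt (l2 L h u) * Real.sqrt (h2n L h u) := by
    rw [hMdef, Real.sqrt_mul (CAg_pos hL hh).le, Real.sqrt_mul hP0, mul_assoc]
  rw [show l2 L h u ^ ((1:ℝ)/2) = Real.sqrt (l2 L h u) from (Real.sqrt_eq_rpow _).symm,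
    show h2n L h u ^ ((1:ℝ)/2) = Real.sqrt (h2n L h u) from (Real.sqrt_eq_rpow _).symm]
  calc |∫ p in dom L h, u p * pdx φ p * ψ p| ≤
      M * (l2 L h (pdx φ) * l2 L h ψ) := hfinal
    _ = Real.sqrt (CAg L h) * Real.sqrt (l2 L h u) * Real.sqrt (h2n L h u) *
        l2 L h (pdx φ) * l2 L h ψ := by rw [hMfact]; ring
end

section
/- There exists a constant c > 0, depending only on L and h, such that for all u of class C¹ on M̄, all φ of class C² on M̄, and all continuous ψ on M̄, one has | ∫_M w(u) (∂_z φ) ψ dM | ≤ c |∂_x u| |∂_z φ|^{1/2} ‖∂_z φ‖_{H¹}^{1/2} |ψ|, where w(u)(x,z) = ∫_z^0 ∂_x u(x,s) ds. -/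
open MeasureTheory Set intervalIntegral

lemma csInt {α : Type*} [MeasurableSpace α] {μ : Measure α} [IsFiniteMeasure μ] {f g : α → ℝ}
    (hf : AEStronglyMeasurable f μ) (hg : AEStronglyMeasurable g μ)
    {Cf Cg : ℝ} (hfb : ∀ᵐ x ∂μ, ‖f x‖ ≤ Cf) (hgb : ∀ᵐ x ∂μ, ‖g x‖ ≤ Cg)
    (hf0 : ∀ x, 0 ≤ f x) (hg0 : ∀ x, 0 ≤ g x) :
    ∫ x, f x * g x ∂μ ≤ Real.sqrt (∫ x, f x ^ 2 ∂μ) * Real.sqrt (∫ x, g x ^ 2 ∂μ) := by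
  have h22 : (2:ℝ).HolderConjugate 2 := Real.HolderConjugate.two_two
  have hof : ENNReal.ofReal (2:ℝ) = 2 := by norm_num
  have := integral_mul_le_Lp_mul_Lq_of_nonneg h22 (Filter.Eventually.of_forall hf0)
    (Filter.Eventually.of_forall hg0)
    (by rw [hof]; exact MemLp.of_bound hf Cf hfb) (by rw [hof]; exact MemLp.of_bound hg Cg hgb)
  calc ∫ x, f x * g x ∂μ ≤ (∫ a, f a ^ (2:ℝ) ∂μ) ^ (1/(2:ℝ)) * (∫ a, g a ^ (2:ℝ) ∂μ) ^ (1/(2:ℝ)) :=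
        this
    _ = Real.sqrt (∫ x, f x ^ 2 ∂μ) * Real.sqrt (∫ x, g x ^ 2 ∂μ) := by
        rw [Real.sqrt_eq_rpow, Real.sqrt_eq_rpow]
        have e : ∀ y : ℝ, y ^ (2:ℝ) = y ^ (2:ℕ) := fun y => by
          rw [show ((2:ℝ)) = ((2:ℕ):ℝ) by norm_num, Real.rpow_natCast]
        simp only [e]

lemma finIoo (a b : ℝ) : IsFiniteMeasure (volume.restrict (Ioo a b)) := by
  constructor
  rw [Measure.restrict_apply_univ, Real.volume_Ioo]
  exact ENNReal.ofReal_lt_top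

lemma cs_Ioo {a b : ℝ} {f g : ℝ → ℝ} (hf : Continuous f) (hg : Continuous g)
    (hf0 : ∀ x, 0 ≤ f x) (hg0 : ∀ x, 0 ≤ g x) :
    ∫ x in Ioo a b, f x * g x ≤
      Real.sqrt (∫ x in Ioo a b, f x ^ 2) * Real.sqrt (∫ x in Ioo a b, g x ^ 2) := by
  haveI := finIoo a b
  obtain ⟨Cf, hCf⟩ := isCompact_Icc.exists_bound_of_continuousOn (hf.continuousOn (s := Icc a b))
  obtain ⟨Cg, hCg⟩ := isCompact_Icc.exists_bound_of_continuousOn (hg.continuousOn (s := Icc a b))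
  have hae : ∀ᵐ x ∂(volume.restrict (Ioo a b)), x ∈ Ioo a b :=
    ae_restrict_mem measurableSet_Ioo
  exact csInt (hf.aestronglyMeasurable.restrict) (hg.aestronglyMeasurable.restrict)
    (hae.mono fun x hx => hCf x (Ioo_subset_Icc_self hx))
    (hae.mono fun x hx => hCg x (Ioo_subset_Icc_self hx)) hf0 hg0

lemma dom_subset (L h : ℝ) : dom L h ⊆ cdom L h :=
  Set.prod_mono Ioo_subset_Icc_self Ioo_subset_Icc_self

lemma cdom_compact (L h : ℝ) : IsCompact (cdom L h) := isCompact_Icc.prod isCompact_Icc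

lemma findom (L h : ℝ) : IsFiniteMeasure (volume.restrict (dom L h)) := by
  constructor
  rw [Measure.restrict_apply_univ]
  exact lt_of_le_of_lt (measure_mono (dom_subset L h)) (cdom_compact L h).measure_lt_top

lemma cs_dom {L h : ℝ} {f g : ℝ × ℝ → ℝ} (hf : Continuous f) (hg : Continuous g)
    (hf0 : ∀ x, 0 ≤ f x) (hg0 : ∀ x, 0 ≤ g x) :
    ∫ p in dom L h, f p * g p ≤
      Real.sqrt (∫ p in dom L h, f p ^ 2) * Real.sqrt (∫ p in dom L h, g p ^ 2) := by
  haveI := findom L h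
  obtain ⟨Cf, hCf⟩ := (cdom_compact L h).exists_bound_of_continuousOn
    (hf.continuousOn (s := cdom L h))
  obtain ⟨Cg, hCg⟩ := (cdom_compact L h).exists_bound_of_continuousOn
    (hg.continuousOn (s := cdom L h))
  have hdm : MeasurableSet (dom L h) :=
    (measurableSet_Ioo.prod measurableSet_Ioo)
  have hae : ∀ᵐ x ∂(volume.restrict (dom L h)), x ∈ dom L h := ae_restrict_mem hdm
  exact csInt (hf.aestronglyMeasurable.restrict) (hg.aestronglyMeasurable.restrict)
    (hae.mono fun x hx => hCf x (dom_subset L h hx))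
    (hae.mono fun x hx => hCg x (dom_subset L h hx)) hf0 hg0

lemma intOn {L h : ℝ} {f : ℝ × ℝ → ℝ} (hf : Continuous f) : IntegrableOn f (dom L h) :=
  ((hf.continuousOn (s := cdom L h)).integrableOn_compact (cdom_compact L h)).mono_set
    (dom_subset L h)

lemma fub {L h : ℝ} {f : ℝ × ℝ → ℝ} (hf : Continuous f) :
    ∫ p in dom L h, f p = ∫ x in Ioo 0 L, ∫ z in Ioo (-h) 0, f (x, z) := by
  have h1 : IntegrableOn f (Ioo 0 L ×ˢ Ioo (-h) 0) (volume.prod volume) := by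
    have := intOn (L := L) (h := h) hf
    rwa [show (volume : Measure (ℝ × ℝ)) = volume.prod volume from (Measure.volume_eq_prod _ _),
      dom] at this
  rw [show (volume : Measure (ℝ × ℝ)) = volume.prod volume from (Measure.volume_eq_prod _ _), dom]
  exact setIntegral_prod f h1

lemma marg {L h : ℝ} {f : ℝ × ℝ → ℝ} (hf : Continuous f) :
    Integrable (fun x => ∫ z in Ioo (-h) 0, f (x, z)) (volume.restrict (Ioo 0 L)) := by
  have h1 : Integrable f ((volume.restrict (Ioo 0 L)).prod (volume.restrict (Ioo (-h) 0))) := by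
    rw [Measure.prod_restrict, ← Measure.volume_eq_prod]
    exact intOn hf
  exact h1.integral_prod_left

lemma margr {L h : ℝ} {f : ℝ × ℝ → ℝ} (hf : Continuous f) :
    Integrable (fun z => ∫ x in Ioo 0 L, f (x, z)) (volume.restrict (Ioo (-h) 0)) := by
  have h1 : Integrable f ((volume.restrict (Ioo 0 L)).prod (volume.restrict (Ioo (-h) 0))) := by
    rw [Measure.prod_restrict, ← Measure.volume_eq_prod]
    exact intOn hf
  exact h1.integral_prod_right


lemma contDiff_pdz_s15 {φ : ℝ × ℝ → ℝ} (hφ : ContDiff ℝ 2 φ) : ContDiff ℝ 1 (pdz φ) := by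
  have h1 : ContDiff ℝ 1 (fderiv ℝ φ) := hφ.fderiv_right (by norm_num)
  exact h1.clm_apply contDiff_const

lemma cont_w {u : ℝ × ℝ → ℝ} (hu : ContDiff ℝ 1 u) : Continuous (wOp u) := by
  have hA : Continuous (pdx u) := cont_pdx hu
  have h1 : Continuous fun p : ℝ × ℝ => ∫ t in (0:ℝ)..p.2, pdx u (p.1, t) :=
    intervalIntegral.continuous_parametric_primitive_of_continuous
      (f := fun x t => pdx u (x, t)) (by exact hA)
  have h2 : wOp u = fun p : ℝ × ℝ => -∫ t in (0:ℝ)..p.2, pdx u (p.1, t) := by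
    funext p
    rw [wOp, intervalIntegral.integral_symm]
  rw [h2]
  exact h1.neg

lemma hasDerivX {f : ℝ × ℝ → ℝ} (hf : Differentiable ℝ f) (t z : ℝ) :
    HasDerivAt (fun s => f (s, z)) (pdx f (t, z)) t := by
  have h1 : HasDerivAt (fun s : ℝ => (s, z)) ((1 : ℝ), (0 : ℝ)) t :=
    (hasDerivAt_id t).prodMk (hasDerivAt_const t z)
  exact (hf (t, z)).hasFDerivAt.comp_hasDerivAt t h1

lemma hasDerivXsq {f : ℝ × ℝ → ℝ} (hf : Differentiable ℝ f) (t z : ℝ) :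
    HasDerivAt (fun s => f (s, z) ^ 2) (2 * f (t, z) * pdx f (t, z)) t := by
  simpa using (hasDerivX hf t z).fun_pow 2


lemma intOn1 {a b : ℝ} {f : ℝ → ℝ} (hf : Continuous f) : IntegrableOn f (Ioo a b) :=
  ((hf.continuousOn (s := Icc a b)).integrableOn_compact isCompact_Icc).mono_set
    Ioo_subset_Icc_self

set_option maxHeartbeats 1000000 in
lemma agmon_s15 {L h : ℝ} (hL : 0 < L) (hh : 0 < h) {F : ℝ × ℝ → ℝ} (hF : ContDiff ℝ 1 F)
    (x₀ : ℝ) (hx₀ : x₀ ∈ Icc 0 L) :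
    ∫ z in Ioo (-h) 0, F (x₀, z) ^ 2 ≤
      (1 / L) * l2 L h F ^ 2 + 2 * l2 L h F * l2 L h (pdx F) := by
  have contF : Continuous F := hF.continuous
  have contFx : Continuous (pdx F) := cont_pdx hF
  have hFd : Differentiable ℝ F := hF.differentiable one_ne_zero
  set Dd : ℝ × ℝ → ℝ := fun p => 2 * F p * pdx F p with hDd
  have contD : Continuous Dd := (continuous_const.mul contF).mul contFx
  set g : ℝ → ℝ := fun x => ∫ z in Ioo (-h) 0, F (x, z) ^ 2 with hg
  set C2 : ℝ := 2 * l2 L h F * l2 L h (pdx F) with hC2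
  -- the integral of |Dd| over the domain is at most C2
  have hDint : ∫ p in dom L h, |Dd p| ≤ C2 := by
    have e1 : ∀ p : ℝ × ℝ, |Dd p| = 2 * (|F p| * |pdx F p|) := by
      intro p
      rw [hDd]
      simp [abs_mul, mul_assoc]
    calc ∫ p in dom L h, |Dd p| = ∫ p in dom L h, 2 * (|F p| * |pdx F p|) := by
          simp only [e1]
      _ = 2 * ∫ p in dom L h, |F p| * |pdx F p| := by rw [MeasureTheory.integral_const_mul]
      _ ≤ 2 * (Real.sqrt (∫ p in dom L h, |F p| ^ 2) * Real.sqrt (∫ p in dom L h, |pdx F p| ^ 2)) := by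
          refine mul_le_mul_of_nonneg_left ?_ (by norm_num)
          exact cs_dom contF.abs contFx.abs (fun p => abs_nonneg _) (fun p => abs_nonneg _)
      _ = C2 := by
          rw [hC2, l2, l2]
          simp only [sq_abs]
          ring
  -- key step: g x₀ ≤ g x + C2 for all x ∈ [0, L]
  have key : ∀ x ∈ Icc (0:ℝ) L, g x₀ ≤ g x + C2 := by
    intro x hx
    have hstep : ∀ z : ℝ, F (x₀, z) ^ 2 - F (x, z) ^ 2 ≤ ∫ t in Ioo 0 L, |Dd (t, z)| := by
      intro z
      have hftc : ∫ t in x..x₀, Dd (t, z) = F (x₀, z) ^ 2 - F (x, z) ^ 2 :=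
        intervalIntegral.integral_eq_sub_of_hasDerivAt
          (fun t _ => hasDerivXsq hFd t z) ((contD.comp (by fun_prop)).intervalIntegrable _ _)
      have hsub : Set.uIoc x x₀ ⊆ Set.uIoc 0 L := by
        rw [uIoc_of_le hL.le]
        intro t ht
        rcases Set.mem_uIoc.mp ht with ⟨h1, h2⟩ | ⟨h1, h2⟩
        · exact ⟨lt_of_le_of_lt hx.1 h1, le_trans h2 hx₀.2⟩
        · exact ⟨lt_of_le_of_lt hx₀.1 h1, le_trans h2 hx.2⟩
      calc F (x₀, z) ^ 2 - F (x, z) ^ 2 ≤ |∫ t in x..x₀, Dd (t, z)| := by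
            rw [hftc]; exact le_abs_self _
        _ ≤ |∫ t in x..x₀, abs (Dd (t, z))| := by
            simpa [Real.norm_eq_abs] using
              intervalIntegral.norm_integral_le_abs_integral_norm
                (f := fun t => Dd (t, z)) (a := x) (b := x₀) (μ := volume)
        _ ≤ |∫ t in (0:ℝ)..L, abs (Dd (t, z))| := by
            refine intervalIntegral.abs_integral_mono_interval hsub ?_ ?_
            · exact Filter.Eventually.of_forall fun t => abs_nonneg _
            · exact ((contD.comp (by fun_prop)).abs.intervalIntegrable _ _)
        _ = ∫ t in Ioo 0 L, |Dd (t, z)| := by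
            rw [intervalIntegral.integral_of_le hL.le, integral_Ioc_eq_integral_Ioo,
              abs_of_nonneg]
            exact setIntegral_nonneg measurableSet_Ioo fun t _ => abs_nonneg _
    have habs : Continuous fun p : ℝ × ℝ => |Dd p| := contD.abs
    have hBint : IntegrableOn (fun z => ∫ t in Ioo 0 L, |Dd (t, z)|) (Ioo (-h) 0) :=
      margr (L := L) (h := h) (f := fun p => |Dd p|) habs
    have hsw : ∫ z in Ioo (-h) 0, ∫ t in Ioo 0 L, |Dd (t, z)| = ∫ p in dom L h, |Dd p| := by
      have hint : Integrable (Function.uncurry fun t z => |Dd (t, z)|)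
          ((volume.restrict (Ioo 0 L)).prod (volume.restrict (Ioo (-h) 0))) := by
        rw [Measure.prod_restrict, ← Measure.volume_eq_prod]
        exact intOn habs
      rw [← MeasureTheory.integral_integral_swap hint]
      exact (fub habs).symm
    have hdiff : g x₀ - g x ≤ ∫ p in dom L h, |Dd p| := by
      have e2 : g x₀ - g x = ∫ z in Ioo (-h) 0, (F (x₀, z) ^ 2 - F (x, z) ^ 2) := by
        rw [hg]
        exact (integral_sub (intOn1 (by fun_prop)) (intOn1 (by fun_prop))).symm
      rw [e2, ← hsw]
      refine setIntegral_mono_on ?_ hBint measurableSet_Ioo fun z _ => hstep z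
      exact (intOn1 (by fun_prop)).sub (intOn1 (by fun_prop))
    have := hDint
    linarith [hdiff]
  -- integrate the inequality over x ∈ (0, L)
  have hgint : IntegrableOn g (Ioo 0 L) :=
    marg (L := L) (h := h) (f := fun p => F p ^ 2) (by fun_prop)
  have e3 : ∫ x in Ioo 0 L, g x₀ = L * g x₀ := by
    rw [setIntegral_const, Real.volume_real_Ioo]
    simp [hL.le, smul_eq_mul]
  have e4 : ∫ x in Ioo 0 L, g x = l2 L h F ^ 2 := by
    rw [hg, ← fub (by fun_prop : Continuous fun p : ℝ × ℝ => F p ^ 2), l2, Real.sq_sqrt]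
    exact setIntegral_nonneg (measurableSet_Ioo.prod measurableSet_Ioo) fun p _ => sq_nonneg _
  have e5 : L * g x₀ ≤ l2 L h F ^ 2 + L * C2 := by
    have h6 : ∫ x in Ioo 0 L, g x₀ ≤ ∫ x in Ioo 0 L, (g x + C2) := by
      refine setIntegral_mono_on (integrableOn_const ?_) (hgint.add
        (integrableOn_const ?_)) measurableSet_Ioo
        (fun x hx => key x (Ioo_subset_Icc_self hx)) <;>
        · rw [Real.volume_Ioo]; exact ENNReal.ofReal_ne_top
    have h7 : ∫ x in Ioo 0 L, (g x + C2) = l2 L h F ^ 2 + L * C2 := by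
      rw [MeasureTheory.integral_add hgint (integrableOn_const (by
        rw [Real.volume_Ioo]; exact ENNReal.ofReal_ne_top)), e4, setIntegral_const,
        Real.volume_real_Ioo]
      simp [hL.le, smul_eq_mul]
    rw [e3] at h6
    rw [h7] at h6
    exact h6
  have h8 : g x₀ ≤ (l2 L h F ^ 2 + L * C2) / L := by
    rw [le_div_iff₀ hL]
    linarith [e5]
  calc g x₀ ≤ (l2 L h F ^ 2 + L * C2) / L := h8
    _ = (1 / L) * l2 L h F ^ 2 + C2 := by field_simp

lemma ii {a b : ℝ} (hab : a ≤ b) (f : ℝ → ℝ) :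
    (∫ z in a..b, f z) = ∫ z in Ioo a b, f z := by
  rw [intervalIntegral.integral_of_le hab, integral_Ioc_eq_integral_Ioo]

lemma l2_nonneg (L h : ℝ) (f : ℝ × ℝ → ℝ) : 0 ≤ l2 L h f := Real.sqrt_nonneg _

lemma l2_le_h1n (L h : ℝ) (f : ℝ × ℝ → ℝ) : l2 L h f ≤ h1n L h f := by
  calc l2 L h f = Real.sqrt (l2 L h f ^ 2) := (Real.sqrt_sq (l2_nonneg L h f)).symm
    _ ≤ h1n L h f := by
        rw [h1n]
        apply Real.sqrt_le_sqrt
        nlinarith [sq_nonneg (l2 L h (pdx f)), sq_nonneg (l2 L h (pdz f))]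

lemma l2x_le_h1n (L h : ℝ) (f : ℝ × ℝ → ℝ) : l2 L h (pdx f) ≤ h1n L h f := by
  calc l2 L h (pdx f) = Real.sqrt (l2 L h (pdx f) ^ 2) :=
        (Real.sqrt_sq (l2_nonneg L h (pdx f))).symm
    _ ≤ h1n L h f := by
        rw [h1n]
        apply Real.sqrt_le_sqrt
        nlinarith [sq_nonneg (l2 L h f), sq_nonneg (l2 L h (pdz f))]

theorem stmt15 (L h : ℝ) (hL : 0 < L) (hh : 0 < h) :
    ∃ c > 0, ∀ u φ ψ : ℝ × ℝ → ℝ,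
      ContDiff ℝ 1 u → ContDiff ℝ 2 φ → Continuous ψ →
      |∫ p in dom L h, wOp u p * pdz φ p * ψ p| ≤
        c * l2 L h (pdx u) * l2 L h (pdz φ) ^ ((1:ℝ)/2) * h1n L h (pdz φ) ^ ((1:ℝ)/2)
          * l2 L h ψ := by
  refine ⟨Real.sqrt (1 / L + 2) * Real.sqrt h, mul_pos (Real.sqrt_pos.2 (by positivity))
    (Real.sqrt_pos.2 hh), fun u φ ψ hu hφ hψ => ?_⟩
  have hno : -h ≤ (0:ℝ) := by linarith
  set A : ℝ × ℝ → ℝ := pdx u with hA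
  set F : ℝ × ℝ → ℝ := pdz φ with hF
  have hF1 : ContDiff ℝ 1 F := contDiff_pdz_s15 hφ
  have contA : Continuous A := cont_pdx hu
  have contF : Continuous F := hF1.continuous
  have contw : Continuous (wOp u) := cont_w hu
  set W : ℝ → ℝ := fun x => ∫ z in (-h)..(0:ℝ), |A (x, z)| with hW
  set G : ℝ → ℝ := fun x => Real.sqrt (∫ z in (-h)..(0:ℝ), F (x, z) ^ 2) with hG
  set P : ℝ → ℝ := fun x => Real.sqrt (∫ z in (-h)..(0:ℝ), ψ (x, z) ^ 2) with hP
  have contW : Continuous W := by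
    apply intervalIntegral.continuous_parametric_intervalIntegral_of_continuous'
      (f := fun x t => |A (x, t)|) (μ := volume)
    exact contA.abs
  have contG : Continuous G := by
    apply Continuous.sqrt
    apply intervalIntegral.continuous_parametric_intervalIntegral_of_continuous'
      (f := fun x t => F (x, t) ^ 2) (μ := volume)
    exact contF.pow 2
  have contP : Continuous P := by
    apply Continuous.sqrt
    apply intervalIntegral.continuous_parametric_intervalIntegral_of_continuous'
      (f := fun x t => ψ (x, t) ^ 2) (μ := volume)
    exact hψ.pow 2
  have W0 : ∀ x, 0 ≤ W x := fun x =>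
    intervalIntegral.integral_nonneg hno fun z _ => abs_nonneg _
  have G0 : ∀ x, 0 ≤ G x := fun x => Real.sqrt_nonneg _
  have P0 : ∀ x, 0 ≤ P x := fun x => Real.sqrt_nonneg _
  set S : ℝ := Real.sqrt ((1 / L) * l2 L h F ^ 2 + 2 * l2 L h F * l2 L h (pdx F)) with hS
  have S0 : 0 ≤ S := Real.sqrt_nonneg _
  have hGS : ∀ x ∈ Icc (0:ℝ) L, G x ≤ S := by
    intro x hx
    rw [hG]
    simp only
    rw [ii hno]
    exact Real.sqrt_le_sqrt (agmon_s15 hL hh hF1 x hx)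
  -- continuity of integrand
  have contI : Continuous fun p : ℝ × ℝ => |wOp u p * F p * ψ p| :=
    ((contw.mul contF).mul hψ).abs
  -- Step 0/1: bound by iterated integral of the absolute value
  have step1 : |∫ p in dom L h, wOp u p * F p * ψ p| ≤
      ∫ x in Ioo 0 L, ∫ z in Ioo (-h) 0, |wOp u (x, z) * F (x, z) * ψ (x, z)| := by
    rw [← fub contI]
    simpa only [Real.norm_eq_abs] using
      MeasureTheory.norm_integral_le_integral_norm (μ := volume.restrict (dom L h))
        (fun p => wOp u p * F p * ψ p)
  -- Step 2: inner estimate for fixed x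
  have step2 : ∀ x ∈ Icc (0:ℝ) L,
      (∫ z in Ioo (-h) 0, |wOp u (x, z) * F (x, z) * ψ (x, z)|) ≤ W x * (G x * P x) := by
    intro x hx
    have hwb : ∀ z ∈ Ioo (-h) (0:ℝ), |wOp u (x, z)| ≤ W x := by
      intro z hz
      have h1 : |∫ s in z..(0:ℝ), A (x, s)| ≤ ∫ s in z..(0:ℝ), |A (x, s)| :=
        intervalIntegral.abs_integral_le_integral_abs hz.2.le
      have h2 : (∫ s in z..(0:ℝ), |A (x, s)|) ≤ ∫ s in (-h)..(0:ℝ), |A (x, s)| := by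
        refine intervalIntegral.integral_mono_interval hz.1.le hz.2.le le_rfl
          (Filter.Eventually.of_forall fun s => abs_nonneg _) ?_
        exact ((contA.comp (by fun_prop)).abs.intervalIntegrable _ _)
      exact le_trans h1 h2
    have hcont1 : Continuous fun z => |wOp u (x, z) * F (x, z) * ψ (x, z)| := by
      apply Continuous.abs
      exact ((contw.comp (by fun_prop)).mul (contF.comp (by fun_prop))).mul
        (hψ.comp (by fun_prop))
    have hcont2 : Continuous fun z => W x * (|F (x, z)| * |ψ (x, z)|) := by
      apply Continuous.mul continuous_const
      exact ((contF.comp (by fun_prop)).abs).mul ((hψ.comp (by fun_prop)).abs)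
    calc (∫ z in Ioo (-h) 0, |wOp u (x, z) * F (x, z) * ψ (x, z)|) ≤
        ∫ z in Ioo (-h) 0, W x * (|F (x, z)| * |ψ (x, z)|) := by
          refine setIntegral_mono_on (intOn1 hcont1) (intOn1 hcont2) measurableSet_Ioo ?_
          intro z hz
          rw [abs_mul, abs_mul]
          rw [mul_assoc]
          refine mul_le_mul_of_nonneg_right (hwb z hz) ?_
          positivity
      _ = W x * ∫ z in Ioo (-h) 0, |F (x, z)| * |ψ (x, z)| := by rw [MeasureTheory.integral_const_mul]
      _ ≤ W x * (G x * P x) := by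
          refine mul_le_mul_of_nonneg_left ?_ (W0 x)
          have hcs := cs_Ioo (a := -h) (b := 0)
            (f := fun z => |F (x, z)|) (g := fun z => |ψ (x, z)|)
            ((contF.comp (by fun_prop)).abs) ((hψ.comp (by fun_prop)).abs)
            (fun z => abs_nonneg _) (fun z => abs_nonneg _)
          simp only [sq_abs] at hcs
          rw [hG, hP]
          simp only
          rw [ii hno, ii hno]
          exact hcs
  -- Step 3: integrate in x
  have step3 : (∫ x in Ioo 0 L, ∫ z in Ioo (-h) 0, |wOp u (x, z) * F (x, z) * ψ (x, z)|) ≤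
      ∫ x in Ioo 0 L, W x * (G x * P x) := by
    refine setIntegral_mono_on ?_ (intOn1 (contW.mul (contG.mul contP)))
      measurableSet_Ioo fun x hx => step2 x (Ioo_subset_Icc_self hx)
    exact marg (L := L) (h := h)
      (f := fun p => |wOp u p * F p * ψ p|) contI
  -- Step 4: pull out the sup bound S for G
  have step4 : (∫ x in Ioo 0 L, W x * (G x * P x)) ≤ S * ∫ x in Ioo 0 L, W x * P x := by
    rw [← MeasureTheory.integral_const_mul]
    refine setIntegral_mono_on (intOn1 (contW.mul (contG.mul contP)))
      (intOn1 (continuous_const.mul (contW.mul contP))) measurableSet_Ioo ?_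
    intro x hx
    have : W x * (G x * P x) = G x * (W x * P x) := by ring
    rw [this]
    exact mul_le_mul_of_nonneg_right (hGS x (Ioo_subset_Icc_self hx))
      (mul_nonneg (W0 x) (P0 x))
  -- Step 5: Cauchy-Schwarz in x
  have step5 : (∫ x in Ioo 0 L, W x * P x) ≤
      Real.sqrt (∫ x in Ioo 0 L, W x ^ 2) * Real.sqrt (∫ x in Ioo 0 L, P x ^ 2) :=
    cs_Ioo contW contP W0 P0
  -- Step 6: identify the P contribution
  have step6 : Real.sqrt (∫ x in Ioo 0 L, P x ^ 2) = l2 L h ψ := by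
    have e1 : ∀ x : ℝ, P x ^ 2 = ∫ z in Ioo (-h) 0, ψ (x, z) ^ 2 := by
      intro x
      rw [hP]
      simp only
      rw [ii hno]
      exact Real.sq_sqrt (setIntegral_nonneg measurableSet_Ioo fun z _ => sq_nonneg _)
    rw [show (∫ x in Ioo 0 L, P x ^ 2) = ∫ x in Ioo 0 L, ∫ z in Ioo (-h) 0, ψ (x, z) ^ 2 from
      setIntegral_congr_fun measurableSet_Ioo fun x _ => e1 x]
    rw [← fub (f := fun p => ψ p ^ 2) (hψ.pow 2), l2]
  -- Step 7: bound the W contribution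
  have step7 : Real.sqrt (∫ x in Ioo 0 L, W x ^ 2) ≤ l2 L h A * Real.sqrt h := by
    have hWx : ∀ x : ℝ, W x ^ 2 ≤ (∫ z in Ioo (-h) 0, A (x, z) ^ 2) * h := by
      intro x
      have hone : (∫ z in Ioo (-h) (0:ℝ), (1:ℝ) ^ 2) = h := by
        simp [Real.volume_Ioo]
        linarith
      have hcs := cs_Ioo (a := -h) (b := 0)
        (f := fun z => |A (x, z)|) (g := fun z => (1:ℝ))
        ((contA.comp (by fun_prop)).abs) continuous_const
        (fun z => abs_nonneg _) (fun z => zero_le_one)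
      simp only [mul_one, sq_abs, hone] at hcs
      have hWx1 : W x ≤ Real.sqrt (∫ z in Ioo (-h) 0, A (x, z) ^ 2) * Real.sqrt h := by
        rw [hW]
        simp only
        rw [ii hno]
        exact hcs
      have h1 : (0:ℝ) ≤ Real.sqrt (∫ z in Ioo (-h) 0, A (x, z) ^ 2) * Real.sqrt h := by
        positivity
      calc W x ^ 2 ≤ (Real.sqrt (∫ z in Ioo (-h) 0, A (x, z) ^ 2) * Real.sqrt h) ^ 2 := by
            exact pow_le_pow_left₀ (W0 x) hWx1 2
        _ = (∫ z in Ioo (-h) 0, A (x, z) ^ 2) * h := by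
            rw [mul_pow, Real.sq_sqrt (setIntegral_nonneg measurableSet_Ioo
              fun z _ => sq_nonneg _), Real.sq_sqrt hh.le]
    have h2 : (∫ x in Ioo 0 L, W x ^ 2) ≤ l2 L h A ^ 2 * h := by
      have h3 : (∫ x in Ioo 0 L, W x ^ 2) ≤
          ∫ x in Ioo 0 L, (∫ z in Ioo (-h) 0, A (x, z) ^ 2) * h := by
        refine setIntegral_mono_on (intOn1 (contW.pow 2)) ?_ measurableSet_Ioo
          fun x _ => hWx x
        exact (marg (L := L) (h := h) (f := fun p => A p ^ 2) (contA.pow 2)).mul_const h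
      have h4 : (∫ x in Ioo 0 L, (∫ z in Ioo (-h) 0, A (x, z) ^ 2) * h) = l2 L h A ^ 2 * h := by
        rw [MeasureTheory.integral_mul_const, ← fub (f := fun p => A p ^ 2) (contA.pow 2), l2, Real.sq_sqrt]
        exact setIntegral_nonneg (measurableSet_Ioo.prod measurableSet_Ioo)
          fun p _ => sq_nonneg _
      linarith
    calc Real.sqrt (∫ x in Ioo 0 L, W x ^ 2) ≤ Real.sqrt (l2 L h A ^ 2 * h) :=
          Real.sqrt_le_sqrt h2
      _ = l2 L h A * Real.sqrt h := by
          rw [Real.sqrt_mul (sq_nonneg _), Real.sqrt_sq (l2_nonneg L h A)]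
  -- Step 8: bound S
  have step8 : S ≤ Real.sqrt (1 / L + 2) * Real.sqrt (l2 L h F) * Real.sqrt (h1n L h F) := by
    have h1 : (1 / L) * l2 L h F ^ 2 + 2 * l2 L h F * l2 L h (pdx F) ≤
        (1 / L + 2) * (l2 L h F * h1n L h F) := by
      have e1 : l2 L h F ≤ h1n L h F := l2_le_h1n L h F
      have e2 : l2 L h (pdx F) ≤ h1n L h F := l2x_le_h1n L h F
      have e3 : (0:ℝ) ≤ l2 L h F := l2_nonneg L h F
      have e4 : (0:ℝ) < 1 / L := by positivity
      have p1 : l2 L h F * l2 L h F ≤ l2 L h F * h1n L h F :=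
        mul_le_mul_of_nonneg_left e1 e3
      have p2 : l2 L h F * l2 L h (pdx F) ≤ l2 L h F * h1n L h F :=
        mul_le_mul_of_nonneg_left e2 e3
      nlinarith [mul_le_mul_of_nonneg_left p1 e4.le, p2]
    calc S ≤ Real.sqrt ((1 / L + 2) * (l2 L h F * h1n L h F)) := Real.sqrt_le_sqrt h1
      _ = Real.sqrt (1 / L + 2) * Real.sqrt (l2 L h F) * Real.sqrt (h1n L h F) := by
          rw [Real.sqrt_mul (by positivity), Real.sqrt_mul (l2_nonneg L h F), mul_assoc]
  -- assemble
  have nn1 : (0:ℝ) ≤ ∫ x in Ioo 0 L, W x * P x := by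
    apply setIntegral_nonneg measurableSet_Ioo
    intro x _
    exact mul_nonneg (W0 x) (P0 x)
  have chain : |∫ p in dom L h, wOp u p * F p * ψ p| ≤
      S * (l2 L h A * Real.sqrt h * l2 L h ψ) := by
    calc |∫ p in dom L h, wOp u p * F p * ψ p| ≤
        ∫ x in Ioo 0 L, ∫ z in Ioo (-h) 0, |wOp u (x, z) * F (x, z) * ψ (x, z)| := step1
      _ ≤ ∫ x in Ioo 0 L, W x * (G x * P x) := step3
      _ ≤ S * ∫ x in Ioo 0 L, W x * P x := step4
      _ ≤ S * (Real.sqrt (∫ x in Ioo 0 L, W x ^ 2) * Real.sqrt (∫ x in Ioo 0 L, P x ^ 2)) :=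
          mul_le_mul_of_nonneg_left step5 S0
      _ ≤ S * (l2 L h A * Real.sqrt h * l2 L h ψ) := by
          refine mul_le_mul_of_nonneg_left ?_ S0
          rw [step6]
          exact mul_le_mul_of_nonneg_right step7 (l2_nonneg L h ψ)
  have final : S * (l2 L h A * Real.sqrt h * l2 L h ψ) ≤
      Real.sqrt (1 / L + 2) * Real.sqrt h * l2 L h A * l2 L h F ^ ((1:ℝ)/2) *
        h1n L h F ^ ((1:ℝ)/2) * l2 L h ψ := by
    have e1 : l2 L h F ^ ((1:ℝ)/2) = Real.sqrt (l2 L h F) := (Real.sqrt_eq_rpow _).symm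
    have e2 : h1n L h F ^ ((1:ℝ)/2) = Real.sqrt (h1n L h F) := (Real.sqrt_eq_rpow _).symm
    rw [e1, e2]
    have h9 : (0:ℝ) ≤ l2 L h A * Real.sqrt h * l2 L h ψ := by
      have := l2_nonneg L h A
      have := l2_nonneg L h ψ
      positivity
    calc S * (l2 L h A * Real.sqrt h * l2 L h ψ) ≤
        (Real.sqrt (1 / L + 2) * Real.sqrt (l2 L h F) * Real.sqrt (h1n L h F)) *
          (l2 L h A * Real.sqrt h * l2 L h ψ) := mul_le_mul_of_nonneg_right step8 h9
      _ = Real.sqrt (1 / L + 2) * Real.sqrt h * l2 L h A * Real.sqrt (l2 L h F) *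
          Real.sqrt (h1n L h F) * l2 L h ψ := by ring
  exact le_trans chain final
end
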